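/- arXiv:2006.15546 — 2 statements merged into one kernel-verified Lean document; each statement's English description precedes it below -/
import Mathlib

section
/- Let R_1 and R_2 be R-cross-sections of IS_n and let φ: R_1 → R_2 be a semigroup isomorphism. Then there exists a permutation Θ of N_n such that φ(α) = Θ^{-1} α Θ for every α ∈ R_1; that is, for every α ∈ R_1 and every x ∈ N_n, x ∈ dom(α) if and only if xΘ ∈ dom(φ(α)), and in that case (xα)Θ = (xΘ)φ(α). -/
open scoped Classical

/-- `IS n` is the full inverse symmetric semigroup: all partial bijections of `Fin n`;
multiplication is composition of partial maps (maps acting on the right). -/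
abbrev IS (n : ℕ) : Type := PEquiv (Fin n) (Fin n)

noncomputable section
namespace ISW

instance {n : ℕ} : Mul (IS n) := ⟨PEquiv.trans⟩
instance {n : ℕ} : One (IS n) := ⟨PEquiv.refl _⟩

/-- The domain of a partial bijection. -/
def pdom {n : ℕ} (f : IS n) : Set (Fin n) := {x | (f x).isSome}

/-- The range of a partial bijection. -/
def pran {n : ℕ} (f : IS n) : Set (Fin n) := {y | (f.symm y).isSome}

/-- Green's R-relation on a semigroup (with identity): `u R v` iff `uS = vS`. -/
def GreenR {S : Type*} [Mul S] (u v : S) : Prop :=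
  {w | ∃ s, w = u * s} = {w | ∃ s, w = v * s}

/-- Green's L-relation on a semigroup (with identity): `u L v` iff `Su = Sv`. -/
def GreenL {S : Type*} [Mul S] (u v : S) : Prop :=
  {w | ∃ s, w = s * u} = {w | ∃ s, w = s * v}

/-- An R-cross-section: a subsemigroup containing exactly one element of every
Green R-class. -/
def IsRCrossSection {S : Type*} [Mul S] (T : Set S) : Prop :=
  (∀ a ∈ T, ∀ b ∈ T, a * b ∈ T) ∧ ∀ x : S, ∃! t, t ∈ T ∧ GreenR x t

/-- An L-cross-section: a subsemigroup containing exactly one element of every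
Green L-class. -/
def IsLCrossSection {S : Type*} [Mul S] (T : Set S) : Prop :=
  (∀ a ∈ T, ∀ b ∈ T, a * b ∈ T) ∧ ∀ x : S, ∃! t, t ∈ T ∧ GreenL x t

/-- `φ` realizes a semigroup isomorphism from `T₁` onto `T₂`. -/
def IsSemiIso {S₁ S₂ : Type*} [Mul S₁] [Mul S₂] (T₁ : Set S₁) (T₂ : Set S₂)
    (φ : S₁ → S₂) : Prop :=
  Set.BijOn φ T₁ T₂ ∧ ∀ a ∈ T₁, ∀ b ∈ T₁, φ (a * b) = φ a * φ b

/-- The partial wreath product `IS m ≀_p IS n`: pairs `(f, a)` with `a ∈ IS n` and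
`f` a partial map from `Fin n` to `IS m` whose domain equals the domain of `a`. -/
structure PW (m n : ℕ) where
  base : IS n
  fib : Fin n → Option (IS m)
  dom_eq : ∀ x, (fib x).isSome ↔ (base x).isSome

/-- Multiplication of the partial wreath product: `(f,a)·(g,b) = (f g^a, ab)`. -/
instance {m n : ℕ} : Mul (PW m n) where
  mul u v :=
    { base := u.base * v.base
      fib := fun x => Option.map₂ (· * ·) (u.fib x) ((u.base x).bind v.fib)
      dom_eq := by
        intro x
        show _ ↔ (((u.base x).bind v.base)).isSome
        cases h : u.base x with
        | none =>
          have : u.fib x = none := by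
            have := (u.dom_eq x)
            simp [h] at this
            simpa using Option.not_isSome_iff_eq_none.mp (by simp [this])
          simp [h, this, Option.map₂]
        | some y =>
          have hf : (u.fib x).isSome := (u.dom_eq x).mpr (by simp [h])
          obtain ⟨s, hs⟩ := Option.isSome_iff_exists.mp hf
          cases h2 : v.base y with
          | none =>
            have : v.fib y = none := by
              have := (v.dom_eq y)
              simp [h2] at this
              simpa using Option.not_isSome_iff_eq_none.mp (by simp [this])
            simp [h, h2, hs, this, Option.map₂]
          | some z =>
            have hg : (v.fib y).isSome := (v.dom_eq y).mpr (by simp [h2])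
            obtain ⟨t, ht⟩ := Option.isSome_iff_exists.mp hg
            simp [h, h2, hs, ht, Option.map₂] }

/-- The identity of the partial wreath product. -/
instance {m n : ℕ} : One (PW m n) where
  one :=
    { base := 1
      fib := fun _ => some 1
      dom_eq := by intro x; simp; rfl }

/-- `chainFun L j x`: with `L` listing the elements of a block in increasing order and
`0 ≤ j < |L|` (`j` is the 0-based version of the paper's index), this is the value at `x` of
the chain `a_{i,j}`: the partial bijection with domain everything except `L[j]`,
sending `L[l] ↦ L[l+1]` for `l < j` and fixing all other points. -/
def chainFun {n : ℕ} (L : List (Fin n)) (j : ℕ) (x : Fin n) : Option (Fin n) :=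
  if x ∈ L then
    if L.idxOf x = j then none
    else if L.idxOf x < j then L[L.idxOf x + 1]?
    else some x
  else some x

/-- The generators `a_{i,j}` attached to an ordered decomposition with blocks `B i`. -/
def RGens {n s : ℕ} (B : Fin s → List (Fin n)) : Set (IS n) :=
  {a : IS n | ∃ i : Fin s, ∃ j : ℕ, j < (B i).length ∧ ∀ x, a x = chainFun (B i) j x}

/-- `R(M⃗₁, …, M⃗ₛ)`: the subsemigroup of `IS n` generated by the chains `a_{i,j}`
together with the identity map. -/
def RSec {n s : ℕ} (B : Fin s → List (Fin n)) : Set (IS n) :=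
  (Subsemigroup.closure (RGens B ∪ {1}) : Subsemigroup (IS n))

/-- A decomposition of `Fin n` into disjoint nonempty blocks, each block equipped with
a linear order, recorded by listing the elements of each block in increasing order. -/
structure OrderedPartition (n s : ℕ) where
  B : Fin s → List (Fin n)
  nonempty : ∀ i, B i ≠ []
  nodup : ∀ i, (B i).Nodup
  disjoint : ∀ i j, i ≠ j → ∀ x, x ∈ B i → x ∉ B j
  cover : ∀ x, ∃ i, x ∈ B i

/-- The chain `a_{i,j}` of the block listed by `L`, viewed inside `IS(M_i)`, i.e. embedded
into `IS n` as a partial bijection whose domain is contained in the block: it is defined on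
`L` minus `L[j]`, sends `L[l] ↦ L[l+1]` for `l < j` and fixes the other points of `L`. -/
def chainFunB {n : ℕ} (L : List (Fin n)) (j : ℕ) (x : Fin n) : Option (Fin n) :=
  if x ∈ L then
    if L.idxOf x = j then none
    else if L.idxOf x < j then L[L.idxOf x + 1]?
    else some x
  else none

/-- The generators of `R(M⃗)` inside `IS(M)` (embedded in `IS n`), `M` listed by `L`. -/
def BlockGens {n : ℕ} (L : List (Fin n)) : Set (IS n) :=
  {a : IS n | ∃ j : ℕ, j < L.length ∧ ∀ x, a x = chainFunB L j x}

/-- The identity of `IS(M)` (embedded in `IS n`): the identity map of the block listed by `L`. -/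
def idOn {n : ℕ} (L : List (Fin n)) : Set (IS n) :=
  {a : IS n | ∀ x, a x = if x ∈ L then some x else none}

/-- The R-cross-section `R(M⃗)` of `IS(M)`, embedded into `IS n`, for the block listed by `L`. -/
def RSecBlock {n : ℕ} (L : List (Fin n)) : Set (IS n) :=
  (Subsemigroup.closure (BlockGens L ∪ idOn L) : Subsemigroup (IS n))

/-- The wreath product `R_i ≀_p R(M⃗_i)` where `R(M⃗_i) ⊆ IS(M_i)`, `M_i` listed by `L`,
and `R_i = T ⊆ IS m`, realized inside `PW m n` via the natural embedding
`IS m ≀_p IS(M_i) ⊆ IS m ≀_p IS n`. -/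
def WBlock (m n : ℕ) (L : List (Fin n)) (T : Set (IS m)) : Set (PW m n) :=
  {u : PW m n | u.base ∈ RSecBlock L ∧ ∀ x f, u.fib x = some f → f ∈ T}

/-- The element `e' = (0̄, 1)` of `IS m ≀_p IS n`: the second component is the identity of
`IS n` and the first component sends every point to the empty map `0` of `IS m`. -/
def ezero (m n : ℕ) : PW m n where
  base := 1
  fib := fun _ => some ⊥
  dom_eq := by intro x; simp; rfl



section Aux

variable {n : ℕ}

lemma mul_apply (a b : IS n) (x : Fin n) : (a * b) x = (a x).bind b := rfl

lemma mem_pdom {a : IS n} {x : Fin n} : x ∈ pdom a ↔ (a x).isSome := Iff.rfl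

lemma mem_pdom_mul {a b : IS n} {x : Fin n} :
    x ∈ pdom (a * b) ↔ ∃ y, a x = some y ∧ y ∈ pdom b := by
  rw [mem_pdom, mul_apply]
  cases h : a x with
  | none => simp
  | some y => simp [mem_pdom]

lemma pdom_mul_subset (a b : IS n) : pdom (a * b) ⊆ pdom a := by
  intro x hx
  obtain ⟨y, hy, -⟩ := mem_pdom_mul.mp hx
  rw [mem_pdom, hy]; rfl

lemma pe_inj {a : IS n} {x x' y : Fin n} (h : a x = some y) (h' : a x' = some y) :
    x = x' := by
  have h1 : a.symm y = some x := a.eq_some_iff.mpr h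
  have h2 : a.symm y = some x' := a.eq_some_iff.mpr h'
  rw [h1] at h2
  exact Option.some.inj h2

lemma factor {a w : IS n} (h : pdom w ⊆ pdom a) : w = a * (a.symm.trans w) := by
  apply PEquiv.ext; intro x
  rw [mul_apply]
  cases hx : a x with
  | none =>
    have hxa : x ∉ pdom a := by rw [mem_pdom, hx]; simp
    have hxw : x ∉ pdom w := fun hw => hxa (h hw)
    rw [mem_pdom] at hxw
    rw [Option.not_isSome_iff_eq_none.mp hxw]
    rfl
  | some y =>
    have hsy : a.symm y = some x := a.eq_some_iff.mpr hx
    show w x = (a.symm y).bind w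
    rw [hsy]
    rfl

lemma greenR_iff {a b : IS n} : GreenR a b ↔ pdom a = pdom b := by
  constructor
  · intro h
    have ha : a ∈ {w | ∃ s, w = b * s} := by
      rw [← h]; exact ⟨_, factor (le_refl (pdom a))⟩
    have hb : b ∈ {w | ∃ s, w = a * s} := by
      rw [h]; exact ⟨_, factor (le_refl (pdom b))⟩
    obtain ⟨s, hs⟩ := ha
    obtain ⟨t, ht⟩ := hb
    apply Set.Subset.antisymm
    · rw [hs]; exact pdom_mul_subset b s
    · rw [ht]; exact pdom_mul_subset a t
  · intro h
    ext w
    constructor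
    · rintro ⟨s, rfl⟩
      have : pdom (a * s) ⊆ pdom b := h ▸ pdom_mul_subset a s
      exact ⟨_, factor this⟩
    · rintro ⟨s, rfl⟩
      have : pdom (b * s) ⊆ pdom a := h.symm ▸ pdom_mul_subset b s
      exact ⟨_, factor this⟩

/-- The partial identity on a set. -/
def idp (A : Set (Fin n)) : IS n where
  toFun x := if x ∈ A then some x else none
  invFun x := if x ∈ A then some x else none
  inv a b := by
    by_cases ha : a ∈ A <;> by_cases hb : b ∈ A <;>
      simp [Option.mem_def, ha, hb] <;> aesop

lemma idp_apply (A : Set (Fin n)) (x : Fin n) :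
    idp A x = if x ∈ A then some x else none := rfl

lemma pdom_idp (A : Set (Fin n)) : pdom (idp A) = A := by
  ext x
  rw [mem_pdom, idp_apply]
  by_cases hx : x ∈ A <;> simp [hx]

lemma cs_exists_unique {T : Set (IS n)} (h : IsRCrossSection T) (A : Set (Fin n)) :
    ∃! t, t ∈ T ∧ pdom t = A := by
  obtain ⟨t, ⟨ht, hg⟩, hu⟩ := h.2 (idp A)
  refine ⟨t, ⟨ht, ?_⟩, ?_⟩
  · rw [← greenR_iff.mp hg, pdom_idp]
  · rintro t' ⟨ht', hd⟩
    exact hu t' ⟨ht', greenR_iff.mpr (by rw [pdom_idp, hd])⟩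

end Aux

/-- every isomorphism of R-cross-sections of `IS n` is a conjugacy:
there is a permutation `Θ` with `φ(α) = Θ⁻¹ α Θ` for all `α`, i.e.
`x ∈ dom α ↔ x Θ ∈ dom φ(α)` and `(x α) Θ = (x Θ) φ(α)`. -/
theorem iso_rcross_is_conjugacy (n : ℕ) (T₁ T₂ : Set (IS n))
    (h₁ : IsRCrossSection T₁) (h₂ : IsRCrossSection T₂)
    (φ : IS n → IS n) (hφ : IsSemiIso T₁ T₂ φ) :
    ∃ Θ : Equiv.Perm (Fin n),
      ∀ α ∈ T₁, ∀ x : Fin n,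
        ((α x).isSome ↔ ((φ α) (Θ x)).isSome) ∧
        (∀ y, α x = some y → (φ α) (Θ x) = some (Θ y)) := by
  classical
  choose S₁ hS₁ using fun A => cs_exists_unique h₁ A
  choose S₂ hS₂ using fun A => cs_exists_unique h₂ A
  obtain ⟨hmul₁, -⟩ := h₁
  obtain ⟨hmul₂, -⟩ := h₂
  obtain ⟨hbij, hhom⟩ := hφ
  have hS₁mem : ∀ A, S₁ A ∈ T₁ := fun A => (hS₁ A).1.1
  have hS₁dom : ∀ A, pdom (S₁ A) = A := fun A => (hS₁ A).1.2
  have hS₂mem : ∀ A, S₂ A ∈ T₂ := fun A => (hS₂ A).1.1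
  have hS₂dom : ∀ A, pdom (S₂ A) = A := fun A => (hS₂ A).1.2
  have uniq₁ : ∀ (A) (t : IS n), t ∈ T₁ → pdom t = A → t = S₁ A :=
    fun A t h1 h2 => (hS₁ A).2 t ⟨h1, h2⟩
  have uniq₂ : ∀ (A) (t : IS n), t ∈ T₂ → pdom t = A → t = S₂ A :=
    fun A t h1 h2 => (hS₂ A).2 t ⟨h1, h2⟩
  -- divisibility matches domain inclusion, in each cross-section
  have mono : ∀ (T : Set (IS n)) (hm : ∀ a ∈ T, ∀ b ∈ T, a * b ∈ T)
      (S : Set (Fin n) → IS n) (hSmem : ∀ A, S A ∈ T) (hSdom : ∀ A, pdom (S A) = A)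
      (hun : ∀ (A) (t : IS n), t ∈ T → pdom t = A → t = S A),
      ∀ α ∈ T, ∀ β ∈ T, pdom α ⊆ pdom β → ∃ γ ∈ T, α = β * γ := by
    intro T hm S hSmem hSdom hun α hα β hβ hsub
    set C : Set (Fin n) := {y | ∃ x ∈ pdom α, β x = some y} with hC
    refine ⟨S C, hSmem C, ?_⟩
    have hdom : pdom (β * S C) = pdom α := by
      ext x
      rw [mem_pdom_mul]
      constructor
      · rintro ⟨y, hy, hyC⟩
        rw [hSdom] at hyC
        obtain ⟨x', hx', hbx'⟩ := hyC
        rwa [pe_inj hy hbx']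
      · intro hx
        obtain ⟨y, hy⟩ := Option.isSome_iff_exists.mp (mem_pdom.mp (hsub hx))
        exact ⟨y, hy, by rw [hSdom]; exact ⟨x, hx, hy⟩⟩
    have h1 : β * S C = S (pdom α) := hun _ _ (hm β hβ _ (hSmem C)) hdom
    have h2 : α = S (pdom α) := hun _ _ hα rfl
    rw [h2, ← h1]
  have mono₁ := mono T₁ hmul₁ S₁ hS₁mem hS₁dom uniq₁
  have mono₂ := mono T₂ hmul₂ S₂ hS₂mem hS₂dom uniq₂
  have phi_mono : ∀ α ∈ T₁, ∀ β ∈ T₁, pdom α ⊆ pdom β → pdom (φ α) ⊆ pdom (φ β) := by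
    intro α hα β hβ hsub
    obtain ⟨γ, hγ, hfac⟩ := mono₁ α hα β hβ hsub
    rw [hfac, hhom β hβ γ hγ]
    exact pdom_mul_subset _ _
  have phi_mono' : ∀ α ∈ T₁, ∀ β ∈ T₁, pdom (φ α) ⊆ pdom (φ β) → pdom α ⊆ pdom β := by
    intro α hα β hβ hsub
    obtain ⟨γ', hγ', hfac⟩ := mono₂ (φ α) (hbij.mapsTo hα) (φ β) (hbij.mapsTo hβ) hsub
    obtain ⟨γ, hγ, rfl⟩ := hbij.surjOn hγ'
    have : φ α = φ (β * γ) := by rw [hfac, hhom β hβ γ hγ]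
    have heq : α = β * γ := hbij.injOn hα (hmul₁ β hβ γ hγ) this
    rw [heq]
    exact pdom_mul_subset _ _
  have hempty : pdom (φ (S₁ ∅)) = ∅ := by
    obtain ⟨α₀, hα₀, hφα₀⟩ := hbij.surjOn (hS₂mem ∅)
    have h0 : pdom (S₁ ∅) ⊆ pdom α₀ := by rw [hS₁dom]; exact Set.empty_subset _
    have := phi_mono _ (hS₁mem ∅) _ hα₀ h0
    rw [hφα₀, hS₂dom] at this
    exact Set.subset_eq_empty this rfl
  have hsing : ∀ x : Fin n, ∃ u, pdom (φ (S₁ {x})) = {u} := by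
    intro x
    have hne : ∃ u, u ∈ pdom (φ (S₁ {x})) := by
      by_contra hc
      push_neg at hc
      have hsub : pdom (φ (S₁ {x})) ⊆ pdom (φ (S₁ ∅)) := by
        intro z hz; exact absurd hz (hc z)
      have := phi_mono' _ (hS₁mem {x}) _ (hS₁mem ∅) hsub
      rw [hS₁dom, hS₁dom] at this
      exact absurd (this rfl) (Set.notMem_empty x)
    obtain ⟨u, hu⟩ := hne
    refine ⟨u, Set.eq_singleton_iff_unique_mem.mpr ⟨hu, ?_⟩⟩
    intro v hv
    obtain ⟨α', hα', hφα'⟩ := hbij.surjOn (hS₂mem {v})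
    have hd' : pdom (φ α') = {v} := by rw [hφα', hS₂dom]
    have hsub : pdom (φ α') ⊆ pdom (φ (S₁ {x})) := by
      rw [hd']; intro z hz; rwa [Set.mem_singleton_iff.mp hz]
    have hsub' : pdom α' ⊆ {x} := by
      have := phi_mono' _ hα' _ (hS₁mem {x}) hsub
      rwa [hS₁dom] at this
    have hne' : (pdom α').Nonempty := by
      rcases Set.eq_empty_or_nonempty (pdom α') with he | hn
      · exfalso
        have h0 : pdom α' ⊆ pdom (S₁ ∅) := by rw [hS₁dom, he]
        have := phi_mono _ hα' _ (hS₁mem ∅) h0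
        rw [hempty, hd'] at this
        exact Set.notMem_empty v (this rfl)
      · exact hn
    have : pdom α' = {x} := (Set.Nonempty.subset_singleton_iff hne').mp hsub'
    have hα'' : α' = S₁ {x} := uniq₁ {x} α' hα' this
    rw [hα''] at hd'
    rw [hd'] at hu
    exact (Set.mem_singleton_iff.mp hu).symm
  choose θ hθ using hsing
  have θinj : Function.Injective θ := by
    intro x y hxy
    have h1 : pdom (φ (S₁ {x})) ⊆ pdom (φ (S₁ {y})) := by rw [hθ, hθ, hxy]
    have := phi_mono' _ (hS₁mem {x}) _ (hS₁mem {y}) h1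
    rw [hS₁dom, hS₁dom] at this
    exact Set.mem_singleton_iff.mp (this rfl)
  have θbij : Function.Bijective θ := Finite.injective_iff_bijective.mp θinj
  have dom_iff : ∀ α ∈ T₁, ∀ x : Fin n, x ∈ pdom α ↔ θ x ∈ pdom (φ α) := by
    intro α hα x
    constructor
    · intro hx
      have h1 : pdom (S₁ {x}) ⊆ pdom α := by
        rw [hS₁dom]; intro z hz; rwa [Set.mem_singleton_iff.mp hz]
      have := phi_mono _ (hS₁mem {x}) _ hα h1
      rw [hθ] at this
      exact this rfl
    · intro hx
      have h1 : pdom (φ (S₁ {x})) ⊆ pdom (φ α) := by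
        rw [hθ]; intro z hz; rwa [Set.mem_singleton_iff.mp hz]
      have := phi_mono' _ (hS₁mem {x}) _ hα h1
      rw [hS₁dom] at this
      exact this rfl
  refine ⟨Equiv.ofBijective θ θbij, ?_⟩
  intro α hα x
  have hΘ : ∀ z, (Equiv.ofBijective θ θbij) z = θ z := fun z => rfl
  constructor
  · rw [hΘ]
    exact dom_iff α hα x
  · intro y hxy
    rw [hΘ, hΘ]
    have hβmem : α * S₁ {y} ∈ T₁ := hmul₁ α hα _ (hS₁mem {y})
    have hxβ : x ∈ pdom (α * S₁ {y}) :=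
      mem_pdom_mul.mpr ⟨y, hxy, by rw [hS₁dom]; rfl⟩
    have hθx : θ x ∈ pdom (φ (α * S₁ {y})) := (dom_iff _ hβmem x).mp hxβ
    rw [hhom α hα _ (hS₁mem {y})] at hθx
    obtain ⟨w, hw, hwmem⟩ := mem_pdom_mul.mp hθx
    rw [hθ] at hwmem
    rw [hw, Set.mem_singleton_iff.mp hwmem]

end ISW
end
end

section
/- Let L_1 and L_2 be L-cross-sections of IS_n and let φ: L_1 → L_2 be a semigroup isomorphism. Then there exists a permutation Θ of N_n such that φ(α) = Θ^{-1} α Θ for every α ∈ L_1; in other words, every isomorphism of L-cross-sections of IS_n is a conjugacy by a permutation. -/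
open scoped Classical

noncomputable section
namespace ISW

namespace CS

variable {n : ℕ}

lemma mul_app (f g : IS n) (x : Fin n) : (f * g) x = (f x).bind g := rfl

lemma mul_assoc' (f g h : IS n) : f * g * h = f * (g * h) := PEquiv.trans_assoc f g h

/-- range as a Finset -/
def rng (f : IS n) : Finset (Fin n) := Finset.univ.filter fun y => (f.symm y).isSome

/-- domain as a Finset -/
def dmn (f : IS n) : Finset (Fin n) := Finset.univ.filter fun x => (f x).isSome

lemma mem_rng {f : IS n} {y : Fin n} : y ∈ rng f ↔ ∃ x, f x = some y := by
  simp [rng, Option.isSome_iff_exists, PEquiv.eq_some_iff]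

lemma mem_dmn {f : IS n} {x : Fin n} : x ∈ dmn f ↔ ∃ y, f x = some y := by
  simp [dmn, Option.isSome_iff_exists]

lemma mem_rng_of_eq {f : IS n} {x y : Fin n} (h : f x = some y) : y ∈ rng f :=
  mem_rng.2 ⟨x, h⟩

lemma mem_dmn_of_eq {f : IS n} {x y : Fin n} (h : f x = some y) : x ∈ dmn f :=
  mem_dmn.2 ⟨y, h⟩

lemma inj' {f : IS n} {x x' y : Fin n} (h : f x = some y) (h' : f x' = some y) : x = x' :=
  PEquiv.inj f h h'

lemma not_mem_dmn {f : IS n} {x : Fin n} : x ∉ dmn f ↔ f x = none := by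
  simp only [mem_dmn, not_exists]
  exact ⟨fun h => Option.eq_none_iff_forall_not_mem.2 (fun y hy => h y hy),
    fun h y hy => by simp [h] at hy⟩

lemma card_dmn (f : IS n) : (dmn f).card = (rng f).card := by
  apply Finset.card_bij (fun x hx => (f x).get (by simpa [dmn] using hx))
  · intro a ha
    have h : (f a).isSome := by simpa [dmn] using ha
    exact mem_rng.2 ⟨a, (Option.some_get h).symm⟩
  · intro a ha b hb hab
    have h1 : (f a).isSome := by simpa [dmn] using ha
    have h2 : (f b).isSome := by simpa [dmn] using hb
    refine inj' (f := f) (y := (f a).get h1) (Option.some_get h1).symm ?_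
    rw [hab]; exact (Option.some_get h2).symm
  · intro y hy
    obtain ⟨x, hx⟩ := mem_rng.1 hy
    exact ⟨x, mem_dmn_of_eq hx, by simp [hx]⟩

/-- partial identity on a finset -/
def pid (A : Finset (Fin n)) : IS n :=
  ⟨fun x => if x ∈ A then some x else none, fun x => if x ∈ A then some x else none, by
    intro a b
    by_cases ha : a ∈ A <;> by_cases hb : b ∈ A <;> simp [ha, hb] <;> aesop⟩

lemma pid_app (A : Finset (Fin n)) (x : Fin n) : pid A x = if x ∈ A then some x else none := rfl

lemma pid_symm (A : Finset (Fin n)) : (pid A).symm = pid A := rfl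

lemma rng_pid (A : Finset (Fin n)) : rng (pid A) = A := by
  ext y; simp only [mem_rng]
  constructor
  · rintro ⟨x, hx⟩
    rw [pid_app] at hx
    split_ifs at hx with h
    · cases hx; exact h
  · intro hy; exact ⟨y, by simp [pid_app, hy]⟩

lemma dmn_pid (A : Finset (Fin n)) : dmn (pid A) = A := by
  ext x; simp only [mem_dmn]
  constructor
  · rintro ⟨y, hy⟩
    rw [pid_app] at hy
    split_ifs at hy with h
    · exact h
  · intro hx; exact ⟨x, by simp [pid_app, hx]⟩

lemma pid_app_mem {A : Finset (Fin n)} {x : Fin n} (h : x ∈ A) : pid A x = some x := by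
  simp [pid_app, h]

lemma bot_app (x : Fin n) : (⊥ : IS n) x = none := rfl

lemma bot_mul (f : IS n) : ⊥ * f = ⊥ := PEquiv.bot_trans f

lemma mul_bot (f : IS n) : f * ⊥ = ⊥ := PEquiv.trans_bot f

lemma rng_eq_empty {f : IS n} (h : rng f = ∅) : f = ⊥ := by
  ext x
  rcases hfx : f x with _ | y
  · rfl
  · exact absurd (mem_rng_of_eq hfx) (by simp [h])

lemma greenL_iff {u v : IS n} : GreenL u v ↔ rng u = rng v := by
  constructor
  · intro h
    have hu : u ∈ {w | ∃ s, w = s * v} := by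
      rw [← h]; exact ⟨1, (PEquiv.refl_trans u).symm⟩
    have hv : v ∈ {w | ∃ s, w = s * u} := by
      rw [h]; exact ⟨1, (PEquiv.refl_trans v).symm⟩
    obtain ⟨s, hs⟩ := hu
    obtain ⟨s', hs'⟩ := hv
    apply Finset.Subset.antisymm
    · intro y hy
      obtain ⟨x, hx⟩ := mem_rng.1 hy
      rw [hs, mul_app] at hx
      obtain ⟨z, _, hz2⟩ := Option.bind_eq_some_iff.1 hx
      exact mem_rng_of_eq hz2
    · intro y hy
      obtain ⟨x, hx⟩ := mem_rng.1 hy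
      rw [hs', mul_app] at hx
      obtain ⟨z, _, hz2⟩ := Option.bind_eq_some_iff.1 hx
      exact mem_rng_of_eq hz2
  · intro h
    have key : ∀ a b : IS n, rng a ⊆ rng b → (a * b.symm) * b = a := by
      intro a b hab
      apply PEquiv.ext; intro x
      rw [mul_app, mul_app]
      rcases hax : a x with _ | y
      · rfl
      · have hy : y ∈ rng b := hab (mem_rng_of_eq hax)
        have : (b.symm y).isSome := by simpa [rng] using hy
        obtain ⟨z, hz⟩ := Option.isSome_iff_exists.1 this
        have hbz : b z = some y := (PEquiv.eq_some_iff b).1 hz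
        simp [hz, hbz]
    ext w
    constructor
    · rintro ⟨s, rfl⟩
      exact ⟨s * (u * v.symm), by rw [mul_assoc', key u v h.le]⟩
    · rintro ⟨s, rfl⟩
      exact ⟨s * (v * u.symm), by rw [mul_assoc', key v u h.ge]⟩


section CrossSection

variable {T : Set (IS n)}

/-- the unique element of `T` with range `A` -/
def tt (hT : IsLCrossSection T) (A : Finset (Fin n)) : IS n :=
  Classical.choose (hT.2 (pid A)).exists

lemma tt_mem (hT : IsLCrossSection T) (A : Finset (Fin n)) : tt hT A ∈ T :=
  (Classical.choose_spec (hT.2 (pid A)).exists).1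

lemma rng_tt (hT : IsLCrossSection T) (A : Finset (Fin n)) : rng (tt hT A) = A := by
  have h : GreenL (pid A) (tt hT A) := (Classical.choose_spec (hT.2 (pid A)).exists).2
  rw [greenL_iff] at h
  rw [← h, rng_pid]

lemma tt_unique (hT : IsLCrossSection T) {u : IS n} {A : Finset (Fin n)} (hu : u ∈ T)
    (h : rng u = A) : u = tt hT A := by
  obtain ⟨t, _ht, huniq⟩ := hT.2 (pid A)
  have h1 : u = t := huniq u ⟨hu, greenL_iff.2 (by rw [h, rng_pid])⟩
  have h2 : tt hT A = t := huniq _ ⟨tt_mem hT A, greenL_iff.2 (by rw [rng_tt, rng_pid])⟩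
  rw [h1, h2]

lemma tt_rng (hT : IsLCrossSection T) {u : IS n} (hu : u ∈ T) : tt hT (rng u) = u :=
  (tt_unique hT hu rfl).symm

lemma mul_mem (hT : IsLCrossSection T) {u v : IS n} (hu : u ∈ T) (hv : v ∈ T) : u * v ∈ T :=
  hT.1 u hu v hv

lemma tt_bot (hT : IsLCrossSection T) : tt hT ∅ = ⊥ :=
  rng_eq_empty (rng_tt hT ∅)

lemma idem_eq_pid {u : IS n} (h : u * u = u) : u = pid (dmn u) := by
  apply PEquiv.ext; intro x
  rw [pid_app]
  split_ifs with hx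
  · obtain ⟨y, hy⟩ := mem_dmn.1 hx
    have h2 : (u * u) x = some y := by rw [h]; exact hy
    rw [mul_app, hy, Option.bind_some] at h2
    have hxy : x = y := inj' hy h2
    rw [hy, hxy]
  · exact not_mem_dmn.1 hx

lemma rng_mul_subset (u v : IS n) : rng (u * v) ⊆ rng v := by
  intro y hy
  obtain ⟨x, hx⟩ := mem_rng.1 hy
  rw [mul_app] at hx
  obtain ⟨z, _, hz2⟩ := Option.bind_eq_some_iff.1 hx
  exact mem_rng_of_eq hz2

/-- an element of `T` whose domain equals its range is a partial identity -/
lemma eq_pid_of_dmn_eq_rng (hT : IsLCrossSection T) {u : IS n} (hu : u ∈ T)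
    (h : dmn u = rng u) : u = pid (rng u) := by
  have hrng : rng (u * u) = rng u := by
    apply Finset.Subset.antisymm (rng_mul_subset u u)
    intro y hy
    obtain ⟨x, hx⟩ := mem_rng.1 hy
    have hx' : x ∈ rng u := by rw [← h]; exact mem_dmn_of_eq hx
    obtain ⟨z, hz⟩ := mem_rng.1 hx'
    exact mem_rng.2 ⟨z, by rw [mul_app, hz, Option.bind_some]; exact hx⟩
  have hidem : u * u = u :=
    (tt_unique hT (mul_mem hT hu hu) hrng).trans (tt_rng hT hu)
  rw [← h]
  exact idem_eq_pid hidem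

/- computations with pid products -/
lemma pid_mul_app (A : Finset (Fin n)) (f : IS n) (x : Fin n) :
    (pid A * f) x = if x ∈ A then f x else none := by
  rw [mul_app, pid_app]
  split_ifs <;> rfl

lemma mul_pid_eq_some {f : IS n} {A : Finset (Fin n)} {x y : Fin n} :
    (f * pid A) x = some y ↔ f x = some y ∧ y ∈ A := by
  rw [mul_app]
  constructor
  · intro h
    obtain ⟨z, hz1, hz2⟩ := Option.bind_eq_some_iff.1 h
    rw [pid_app] at hz2
    split_ifs at hz2 with hzA
    · cases hz2; exact ⟨hz1, hzA⟩
  · rintro ⟨h1, h2⟩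
    rw [h1, Option.bind_some, pid_app, if_pos h2]

lemma rng_mul_pid (f : IS n) (A : Finset (Fin n)) : rng (f * pid A) = rng f ∩ A := by
  ext y
  simp only [mem_rng, Finset.mem_inter]
  constructor
  · rintro ⟨x, hx⟩
    obtain ⟨h1, h2⟩ := mul_pid_eq_some.1 hx
    exact ⟨⟨x, h1⟩, h2⟩
  · rintro ⟨⟨x, hx⟩, hy⟩
    exact ⟨x, mul_pid_eq_some.2 ⟨hx, hy⟩⟩

lemma pid_mul_eq_self_iff {f : IS n} {A : Finset (Fin n)} :
    pid A * f = f ↔ dmn f ⊆ A := by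
  constructor
  · intro h x hx
    obtain ⟨y, hy⟩ := mem_dmn.1 hx
    have h2 : (pid A * f) x = f x := by rw [h]
    rw [pid_mul_app] at h2
    by_contra hxA
    rw [if_neg hxA, hy] at h2
    cases h2
  · intro h
    apply PEquiv.ext; intro x
    rw [pid_mul_app]
    split_ifs with hxA
    · rfl
    · rcases hfx : f x with _ | y
      · rfl
      · exact absurd (h (mem_dmn_of_eq hfx)) hxA

end CrossSection

section Sigma

variable {T : Set (IS n)}

lemma rng_single (a b : Fin n) : rng (PEquiv.single a b : IS n) = {b} := by
  ext y
  simp only [mem_rng, Finset.mem_singleton]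
  constructor
  · rintro ⟨x, hx⟩
    by_cases hxa : x = a
    · subst hxa; rw [PEquiv.single_apply] at hx; cases hx; rfl
    · rw [PEquiv.single_apply_of_ne (Ne.symm hxa)] at hx; cases hx
  · rintro rfl; exact ⟨a, PEquiv.single_apply _ _⟩

/-- `sig x` is the unique point of the domain of the rank-one element with range `{x}` -/
def sig (hT : IsLCrossSection T) (x : Fin n) : Fin n :=
  ((tt hT {x}).symm x).get (by
    have : x ∈ rng (tt hT {x}) := by rw [rng_tt]; exact Finset.mem_singleton_self x
    simpa [rng] using this)

lemma sig_symm_spec (hT : IsLCrossSection T) (x : Fin n) :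
    (tt hT {x}).symm x = some (sig hT x) := (Option.some_get _).symm

lemma sig_spec (hT : IsLCrossSection T) (x : Fin n) :
    tt hT {x} (sig hT x) = some x := (PEquiv.eq_some_iff _).1 (sig_symm_spec hT x)

lemma tt_single (hT : IsLCrossSection T) (x : Fin n) :
    tt hT {x} = PEquiv.single (sig hT x) x := by
  apply PEquiv.ext; intro z
  by_cases hz : z = sig hT x
  · subst hz; rw [sig_spec, PEquiv.single_apply]
  · rw [PEquiv.single_apply_of_ne (Ne.symm hz)]
    rcases h : tt hT {x} z with _ | w
    · rfl
    · have hw : w ∈ rng (tt hT {x}) := mem_rng_of_eq h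
      rw [rng_tt] at hw
      rw [Finset.mem_singleton] at hw
      rw [hw] at h
      exact absurd (inj' h (sig_spec hT x)) hz

lemma sig_eq_of_apply (hT : IsLCrossSection T) {t : IS n} (ht : t ∈ T) {x y : Fin n}
    (h : t x = some y) : sig hT y = sig hT x := by
  set u := tt hT {x} * t with hu
  have humem : u ∈ T := mul_mem hT (tt_mem hT _) ht
  have happ : ∀ z, u z = if z = sig hT x then some y else none := by
    intro z
    rw [hu, mul_app, tt_single]
    by_cases hz : z = sig hT x
    · subst hz; rw [PEquiv.single_apply, Option.bind_some, if_pos rfl, h]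
    · rw [PEquiv.single_apply_of_ne (Ne.symm hz), if_neg hz]; rfl
  have hrng : rng u = {y} := by
    ext w
    simp only [mem_rng, Finset.mem_singleton]
    constructor
    · rintro ⟨z, hz⟩
      rw [happ z] at hz
      split_ifs at hz
      · cases hz; rfl
    · rintro rfl
      exact ⟨sig hT x, by rw [happ, if_pos rfl]⟩
  have : u = tt hT {y} := tt_unique hT humem hrng
  rw [tt_single] at this
  have h2 : PEquiv.single (sig hT y) y (sig hT x) = some y := by
    rw [← this, happ, if_pos rfl]
  by_contra hne
  rw [PEquiv.single_apply_of_ne hne] at h2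
  cases h2

lemma sig_sig (hT : IsLCrossSection T) (x : Fin n) : sig hT (sig hT x) = sig hT x :=
  (sig_eq_of_apply hT (tt_mem hT {x}) (sig_spec hT x)).symm

/-- the block of `c`: points whose sigma is `c` -/
def blk (hT : IsLCrossSection T) (c : Fin n) : Finset (Fin n) :=
  Finset.univ.filter fun x => sig hT x = c

lemma mem_blk {hT : IsLCrossSection T} {c x : Fin n} : x ∈ blk hT c ↔ sig hT x = c := by
  simp [blk]

lemma dmn_subset_blk (hT : IsLCrossSection T) {c : Fin n} {S : Finset (Fin n)}
    (hS : S ⊆ blk hT c) : dmn (tt hT S) ⊆ blk hT c := by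
  intro x hx
  obtain ⟨y, hy⟩ := mem_dmn.1 hx
  have hyS : y ∈ S := by rw [← rng_tt hT S]; exact mem_rng_of_eq hy
  rw [mem_blk, ← sig_eq_of_apply hT (tt_mem hT S) hy]
  exact mem_blk.1 (hS hyS)

lemma tt_blk_eq_pid (hT : IsLCrossSection T) (c : Fin n) :
    tt hT (blk hT c) = pid (blk hT c) := by
  have hsub : dmn (tt hT (blk hT c)) ⊆ blk hT c := dmn_subset_blk hT (le_refl _)
  have hcard : (dmn (tt hT (blk hT c))).card = (blk hT c).card := by
    rw [card_dmn, rng_tt]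
  have hdmn : dmn (tt hT (blk hT c)) = blk hT c :=
    Finset.eq_of_subset_of_card_le hsub (le_of_eq hcard.symm)
  have := eq_pid_of_dmn_eq_rng hT (tt_mem hT _) (by rw [hdmn, rng_tt])
  rwa [rng_tt] at this

lemma pid_blk_mem (hT : IsLCrossSection T) (c : Fin n) : pid (blk hT c) ∈ T := by
  rw [← tt_blk_eq_pid]; exact tt_mem hT _

/-- blockwise evaluation: `tt A` agrees with `tt (A ∩ blk c)` on the block of `c` -/
lemma app_inter_blk (hT : IsLCrossSection T) (A : Finset (Fin n)) {z c : Fin n}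
    (hc : sig hT z = c) : tt hT (A ∩ blk hT c) z = tt hT A z := by
  set w := tt hT A * pid (blk hT c) with hw
  have hwT : w ∈ T := mul_mem hT (tt_mem hT _) (pid_blk_mem hT c)
  have hwrng : rng w = A ∩ blk hT c := by rw [hw, rng_mul_pid, rng_tt]
  have hweq : w = tt hT (A ∩ blk hT c) := tt_unique hT hwT hwrng
  rw [← hweq, hw, mul_app]
  rcases hAz : tt hT A z with _ | y
  · rfl
  · have hyc : sig hT y = c := by rw [← hc]; exact sig_eq_of_apply hT (tt_mem hT A) hAz
    rw [Option.bind_some, pid_app_mem (mem_blk.2 hyc)]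


end Sigma

section Chain

variable {T : Set (IS n)}

lemma mul_app_eq_some {u v : IS n} {x w : Fin n} :
    (u * v) x = some w ↔ ∃ y, u x = some y ∧ v y = some w := by
  rw [mul_app]; exact Option.bind_eq_some_iff

lemma dmn_pid_mul (A : Finset (Fin n)) (f : IS n) : dmn (pid A * f) = dmn f ∩ A := by
  ext z
  simp only [mem_dmn, Finset.mem_inter]
  constructor
  · rintro ⟨y, hy⟩
    rw [pid_mul_app] at hy
    split_ifs at hy with h
    · exact ⟨⟨y, hy⟩, h⟩
  · rintro ⟨⟨y, hy⟩, hz⟩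
    exact ⟨y, by rw [pid_mul_app, if_pos hz]; exact hy⟩

/-- the shape of `tt (insert x D)` over an idempotent `D` inside a block -/
lemma insert_shape (hT : IsLCrossSection T) {c : Fin n} {D : Finset (Fin n)}
    (hD : D ⊆ blk hT c) (hpid : tt hT D = pid D) {x : Fin n} (hx : x ∈ blk hT c)
    (hxD : x ∉ D) :
    ∃ d, d ∈ blk hT c ∧ d ∉ D ∧
      ∀ z, tt hT (insert x D) z = if z ∈ D then some z else if z = d then some x else none := by
  set τ := tt hT (insert x D) with hτ
  have hτmem : τ ∈ T := tt_mem hT _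
  have hτrng : rng τ = insert x D := rng_tt hT _
  -- τ * pid D = pid D
  have hprod : τ * pid D = pid D := by
    have h1 : τ * pid D ∈ T := mul_mem hT hτmem (hpid ▸ tt_mem hT D)
    have h2 : rng (τ * pid D) = D := by
      rw [rng_mul_pid, hτrng, Finset.inter_eq_right.2 (Finset.subset_insert x D)]
    rw [tt_unique hT h1 h2, hpid]
  have hfix : ∀ z ∈ D, τ z = some z := by
    intro z hz
    have : (τ * pid D) z = some z := by rw [hprod, pid_app_mem hz]
    exact (mul_pid_eq_some.1 this).1
  have havoid : ∀ z y, z ∉ D → τ z = some y → y ∉ D := by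
    intro z y hz hy hyD
    have : (τ * pid D) z = some y := mul_pid_eq_some.2 ⟨hy, hyD⟩
    rw [hprod, pid_app] at this
    split_ifs at this
  -- domain has exactly one extra point
  have hDsub : D ⊆ dmn τ := fun z hz => mem_dmn_of_eq (hfix z hz)
  have hcard : (dmn τ).card = D.card + 1 := by
    rw [card_dmn, hτrng, Finset.card_insert_of_notMem hxD]
  have hsd : (dmn τ \ D).card = 1 := by
    rw [Finset.card_sdiff_of_subset hDsub, hcard]; simp
  obtain ⟨d, hd⟩ := Finset.card_eq_one.1 hsd
  have hdmem : d ∈ dmn τ ∧ d ∉ D := by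
    have : d ∈ dmn τ \ D := by rw [hd]; exact Finset.mem_singleton_self d
    exact ⟨(Finset.mem_sdiff.1 this).1, (Finset.mem_sdiff.1 this).2⟩
  have hdextra : ∀ z, z ∈ dmn τ → z ∉ D → z = d := by
    intro z hz hzD
    have : z ∈ dmn τ \ D := Finset.mem_sdiff.2 ⟨hz, hzD⟩
    rw [hd] at this; exact Finset.mem_singleton.1 this
  -- τ d = some x
  have hdx : τ d = some x := by
    obtain ⟨y, hy⟩ := mem_dmn.1 hdmem.1
    have hyr : y ∈ insert x D := by rw [← hτrng]; exact mem_rng_of_eq hy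
    have hyD : y ∉ D := havoid d y hdmem.2 hy
    rcases Finset.mem_insert.1 hyr with h | h
    · rw [h] at hy; exact hy
    · exact absurd h hyD
  refine ⟨d, ?_, hdmem.2, ?_⟩
  · exact dmn_subset_blk hT (by
      intro z hz
      rcases Finset.mem_insert.1 hz with h | h
      · rw [h]; exact hx
      · exact hD h) hdmem.1
  · intro z
    split_ifs with h1 h2
    · exact hfix z h1
    · rw [h2]; exact hdx
    · rcases hz : τ z with _ | y
      · rfl
      · exact absurd (hdextra z (mem_dmn_of_eq hz) h1) h2

/-- two elements of a block having "identity-like" insert-shapes must coincide -/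
lemma pair_force (hT : IsLCrossSection T) {c : Fin n} {D : Finset (Fin n)}
    {e e' : Fin n} (heM : e ∈ blk hT c) (heD : e ∉ D) (he'D : e' ∉ D) (hee : e' ≠ e)
    (hsh : ∀ z, tt hT (insert e D) z = if z ∈ D then some z else if z = e then some e else none) :
    tt hT ({e, e'} : Finset (Fin n)) c = some e := by
  set π := tt hT ({e, e'} : Finset (Fin n)) with hπ
  have hq : ∀ z, (π * tt hT (insert e D)) z = if π z = some e then some e else none := by
    intro z
    rw [mul_app]
    rcases hπz : π z with _ | w
    · simp
    · rw [Option.bind_some, hsh w]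
      have hw : w ∈ ({e, e'} : Finset (Fin n)) := by
        rw [hπ] at hπz
        have := mem_rng_of_eq hπz
        rwa [rng_tt] at this
      rcases Finset.mem_insert.1 hw with rfl | hw'
      · rw [if_neg heD, if_pos rfl, if_pos rfl]
      · rw [Finset.mem_singleton] at hw'
        subst hw'
        rw [if_neg he'D, if_neg hee, if_neg (fun hcon => hee (Option.some.inj hcon))]
  have hqrng : rng (π * tt hT (insert e D)) = {e} := by
    ext w
    simp only [mem_rng, Finset.mem_singleton]
    constructor
    · rintro ⟨z, hz⟩
      rw [hq z] at hz
      split_ifs at hz with h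
      · cases hz; rfl
    · intro hwe
      rw [hwe]
      have he2 : e ∈ rng π := by rw [hπ, rng_tt]; exact Finset.mem_insert_self e {e'}
      obtain ⟨z, hz⟩ := mem_rng.1 he2
      exact ⟨z, by rw [hq z, if_pos hz]⟩
  have heq : π * tt hT (insert e D) = tt hT {e} :=
    tt_unique hT (mul_mem hT (tt_mem hT _) (tt_mem hT _)) hqrng
  have hsig : sig hT e = c := mem_blk.1 heM
  have happ : (π * tt hT (insert e D)) c = some e := by
    rw [heq, tt_single, hsig, PEquiv.single_apply]
  rw [hq c] at happ
  split_ifs at happ with h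
  · exact h

/-- the extension point is unique across all choices of `x` -/
lemma step_exists (hT : IsLCrossSection T) {c : Fin n} (_hc : sig hT c = c)
    {D : Finset (Fin n)} (hD : D ⊆ blk hT c) (hpid : tt hT D = pid D)
    (hne : D ≠ blk hT c) :
    ∃ m, m ∈ blk hT c ∧ m ∉ D ∧
      ∀ x ∈ blk hT c, x ∉ D → ∀ z,
        tt hT (insert x D) z = if z ∈ D then some z else if z = m then some x else none := by
  have hshape := fun (x : Fin n) (hx : x ∈ blk hT c) (hxD : x ∉ D) =>
    insert_shape hT hD hpid hx hxD
  classical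
  choose dfun hd1 hd2 hd3 using hshape
  -- Claim 1 : dfun y = x → dfun x = dfun y
  have claim1 : ∀ x hx hxD y hy hyD, dfun y hy hyD = x → dfun x hx hxD = dfun y hy hyD := by
    intro x hx hxD y hy hyD hdyx
    by_cases hxy : x = y
    · subst hxy; rfl
    have hp : ∀ z, (tt hT (insert x D) * tt hT (insert y D)) z =
        if z ∈ D then some z else if z = dfun x hx hxD then some y else none := by
      intro z
      rw [mul_app]
      by_cases h1 : z ∈ D
      · rw [if_pos h1, hd3 x hx hxD z, if_pos h1, Option.bind_some, hd3 y hy hyD z, if_pos h1]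
      · rw [if_neg h1, hd3 x hx hxD z, if_neg h1]
        by_cases h2 : z = dfun x hx hxD
        · rw [if_pos h2, if_pos h2, Option.bind_some, hd3 y hy hyD x,
            if_neg hxD, if_pos hdyx.symm]
        · rw [if_neg h2, if_neg h2]; rfl
    have hprng : rng (tt hT (insert x D) * tt hT (insert y D)) = insert y D := by
      ext w
      simp only [mem_rng, Finset.mem_insert]
      constructor
      · rintro ⟨z, hz⟩
        rw [hp z] at hz
        split_ifs at hz with h1 h2
        · cases hz; right; exact h1
        · cases hz; left; rfl
      · rintro (rfl | hw)
        · exact ⟨dfun x hx hxD, by rw [hp, if_neg (hd2 x hx hxD), if_pos rfl]⟩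
        · exact ⟨w, by rw [hp, if_pos hw]⟩
    have heqτ : tt hT (insert x D) * tt hT (insert y D) = tt hT (insert y D) :=
      tt_unique hT (mul_mem hT (tt_mem hT _) (tt_mem hT _)) hprng
    have hval : tt hT (insert y D) (dfun x hx hxD) = some y := by
      rw [← heqτ, hp, if_neg (hd2 x hx hxD), if_pos rfl]
    rw [hd3 y hy hyD (dfun x hx hxD)] at hval
    split_ifs at hval with h1 h2
    · exact absurd h1 (hd2 x hx hxD)
    · exact h2
  have hfixd : ∀ x hx hxD, dfun (dfun x hx hxD) (hd1 x hx hxD) (hd2 x hx hxD) = dfun x hx hxD :=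
    fun x hx hxD => claim1 _ _ _ x hx hxD rfl
  -- Claim 2 : constancy of dfun
  have claim2 : ∀ x hx hxD y hy hyD, dfun x hx hxD = dfun y hy hyD := by
    intro x hx hxD y hy hyD
    by_contra hab
    have hshA : ∀ z, tt hT (insert (dfun x hx hxD) D) z =
        if z ∈ D then some z else if z = dfun x hx hxD then some (dfun x hx hxD) else none := by
      have := hd3 (dfun x hx hxD) (hd1 x hx hxD) (hd2 x hx hxD)
      rwa [hfixd x hx hxD] at this
    have hshB : ∀ z, tt hT (insert (dfun y hy hyD) D) z =
        if z ∈ D then some z else if z = dfun y hy hyD then some (dfun y hy hyD) else none := by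
      have := hd3 (dfun y hy hyD) (hd1 y hy hyD) (hd2 y hy hyD)
      rwa [hfixd y hy hyD] at this
    have h1 := pair_force hT (hd1 x hx hxD) (hd2 x hx hxD) (hd2 y hy hyD)
      (fun hcon => hab hcon.symm) hshA
    have h2 := pair_force hT (hd1 y hy hyD) (hd2 y hy hyD) (hd2 x hx hxD) hab hshB
    rw [Finset.pair_comm] at h2
    rw [h1] at h2
    exact hab (Option.some.inj h2)
  -- conclusion
  have hne' : ∃ x₀, x₀ ∈ blk hT c ∧ x₀ ∉ D := by
    by_contra h
    push_neg at h
    exact hne (Finset.Subset.antisymm hD (fun z hz => by_contra fun hzD => hzD (h z hz)))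
  obtain ⟨x₀, hx₀M, hx₀D⟩ := hne'
  refine ⟨dfun x₀ hx₀M hx₀D, hd1 _ _ _, hd2 _ _ _, ?_⟩
  intro x hxM hxD z
  rw [hd3 x hxM hxD z, claim2 x hxM hxD x₀ hx₀M hx₀D]

/-- the canonical next point of the chain of a block -/
def nxt (hT : IsLCrossSection T) (c : Fin n) (D : Finset (Fin n)) : Fin n :=
  if h : ∃ m, m ∈ blk hT c ∧ m ∉ D ∧ ∀ x ∈ blk hT c, x ∉ D → ∀ z,
      tt hT (insert x D) z = if z ∈ D then some z else if z = m then some x else none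
  then h.choose else c

/-- the chain of initial segments of a block -/
def chainD (hT : IsLCrossSection T) (c : Fin n) : ℕ → Finset (Fin n)
  | 0 => ∅
  | l + 1 => insert (nxt hT c (chainD hT c l)) (chainD hT c l)

/-- the `l`-th element of the chain of a block -/
def emm (hT : IsLCrossSection T) (c : Fin n) (l : ℕ) : Fin n := nxt hT c (chainD hT c l)

lemma chain_zero (hT : IsLCrossSection T) (c : Fin n) : chainD hT c 0 = ∅ := rfl

lemma chain_succ (hT : IsLCrossSection T) (c : Fin n) (l : ℕ) :
    chainD hT c (l + 1) = insert (emm hT c l) (chainD hT c l) := rfl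

lemma pid_empty : pid (∅ : Finset (Fin n)) = (⊥ : IS n) := by
  apply PEquiv.ext; intro z
  rw [pid_app, if_neg (Finset.notMem_empty z)]; rfl

lemma nxt_spec (hT : IsLCrossSection T) {c : Fin n} {D : Finset (Fin n)}
    (h : ∃ m, m ∈ blk hT c ∧ m ∉ D ∧ ∀ x ∈ blk hT c, x ∉ D → ∀ z,
      tt hT (insert x D) z = if z ∈ D then some z else if z = m then some x else none) :
    nxt hT c D ∈ blk hT c ∧ nxt hT c D ∉ D ∧ ∀ x ∈ blk hT c, x ∉ D → ∀ z,
      tt hT (insert x D) z = if z ∈ D then some z else if z = nxt hT c D then some x else none := by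
  unfold nxt
  rw [dif_pos h]
  exact h.choose_spec

lemma chain_inv (hT : IsLCrossSection T) {c : Fin n} (hc : sig hT c = c) :
    ∀ l, l ≤ (blk hT c).card → chainD hT c l ⊆ blk hT c ∧ (chainD hT c l).card = l ∧
      tt hT (chainD hT c l) = pid (chainD hT c l) := by
  intro l
  induction l with
  | zero =>
    intro _
    exact ⟨Finset.empty_subset _, Finset.card_empty, by rw [chain_zero, tt_bot, pid_empty]⟩
  | succ l IH =>
    intro hl1
    obtain ⟨hsub, hcard, hpid⟩ := IH (Nat.le_of_succ_le hl1)
    have hne : chainD hT c l ≠ blk hT c := fun h => by rw [h] at hcard; omega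
    obtain ⟨hm1, hm2, hm3⟩ := nxt_spec hT (step_exists hT hc hsub hpid hne)
    have hm1 : emm hT c l ∈ blk hT c := hm1
    have hm2 : emm hT c l ∉ chainD hT c l := hm2
    have hm3 : ∀ x ∈ blk hT c, x ∉ chainD hT c l → ∀ z,
        tt hT (insert x (chainD hT c l)) z =
        if z ∈ chainD hT c l then some z else if z = emm hT c l then some x else none := hm3
    refine ⟨?_, ?_, ?_⟩
    · rw [chain_succ]; exact Finset.insert_subset hm1 hsub
    · rw [chain_succ, Finset.card_insert_of_notMem hm2, hcard]
    · rw [chain_succ]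
      have heq := tt_unique hT (tt_mem hT (insert (emm hT c l) (chainD hT c l))) (rng_tt hT _)
      apply PEquiv.ext; intro z
      rw [hm3 (emm hT c l) hm1 hm2 z, pid_app]
      by_cases h1 : z ∈ chainD hT c l
      · rw [if_pos h1, if_pos (Finset.mem_insert_of_mem h1)]
      · rw [if_neg h1]
        by_cases h2 : z = emm hT c l
        · rw [if_pos h2, if_pos (by rw [h2]; exact Finset.mem_insert_self _ _), h2]
        · rw [if_neg h2, if_neg (by simp [Finset.mem_insert, h1, h2])]

lemma chain_dagger (hT : IsLCrossSection T) {c : Fin n} (hc : sig hT c = c) {l : ℕ}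
    (hl : l < (blk hT c).card) :
    emm hT c l ∈ blk hT c ∧ emm hT c l ∉ chainD hT c l ∧
    ∀ x ∈ blk hT c, x ∉ chainD hT c l → ∀ z, tt hT (insert x (chainD hT c l)) z =
      if z ∈ chainD hT c l then some z else if z = emm hT c l then some x else none := by
  obtain ⟨hsub, hcard, hpid⟩ := chain_inv hT hc l (le_of_lt hl)
  obtain ⟨hm1, hm2, hm3⟩ :=
    nxt_spec hT (step_exists hT hc hsub hpid (fun h => by rw [h] at hcard; omega))
  exact ⟨hm1, hm2, hm3⟩

lemma chain_mono (hT : IsLCrossSection T) (c : Fin n) : Monotone (chainD hT c) := by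
  apply monotone_nat_of_le_succ
  intro l
  rw [chain_succ]
  exact Finset.subset_insert _ _

lemma chain_eq_blk (hT : IsLCrossSection T) {c : Fin n} (hc : sig hT c = c) {l : ℕ}
    (hk : (blk hT c).card ≤ l) : chainD hT c l = blk hT c := by
  induction l with
  | zero =>
    rw [chain_zero]
    exact (Finset.card_eq_zero.1 (Nat.le_zero.1 hk)).symm
  | succ l IH =>
    by_cases h : (blk hT c).card ≤ l
    · have hl := IH h
      have hnone : nxt hT c (blk hT c) = c := by
        unfold nxt
        rw [dif_neg]
        rintro ⟨m, hm1, hm2, _⟩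
        exact hm2 hm1
      rw [chain_succ]
      unfold emm
      rw [hl, hnone]
      exact Finset.insert_eq_self.2 (mem_blk.2 hc)
    · obtain ⟨hsub, hcard, _⟩ := chain_inv hT hc (l+1) (by omega)
      exact Finset.eq_of_subset_of_card_le hsub (by omega)

lemma chain_sub_blk (hT : IsLCrossSection T) {c : Fin n} (hc : sig hT c = c) (l : ℕ) :
    chainD hT c l ⊆ blk hT c := by
  rcases le_or_gt l (blk hT c).card with h | h
  · exact (chain_inv hT hc l h).1
  · rw [chain_eq_blk hT hc (le_of_lt h)]

lemma chain_card (hT : IsLCrossSection T) {c : Fin n} (hc : sig hT c = c) {l : ℕ}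
    (hl : l ≤ (blk hT c).card) : (chainD hT c l).card = l := (chain_inv hT hc l hl).2.1

lemma tt_chain_eq_pid (hT : IsLCrossSection T) {c : Fin n} (hc : sig hT c = c) {l : ℕ}
    (hl : l ≤ (blk hT c).card) : tt hT (chainD hT c l) = pid (chainD hT c l) :=
  (chain_inv hT hc l hl).2.2

/-- the position of a point within the chain of its block -/
def posn (hT : IsLCrossSection T) (c : Fin n) (x : Fin n) : ℕ :=
  if h : ∃ l, x ∈ chainD hT c (l + 1) then Nat.find h else 0

lemma posn_exists {hT : IsLCrossSection T} {c x : Fin n} (hc : sig hT c = c)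
    (hx : x ∈ blk hT c) : ∃ l, x ∈ chainD hT c (l + 1) :=
  ⟨(blk hT c).card, by rw [chain_eq_blk hT hc (by omega)]; exact hx⟩

lemma mem_chain_iff_posn (hT : IsLCrossSection T) {c : Fin n} (hc : sig hT c = c)
    {x : Fin n} (hx : x ∈ blk hT c) (l : ℕ) :
    x ∈ chainD hT c l ↔ posn hT c x < l := by
  have h := posn_exists hc hx
  rw [posn, dif_pos h]
  constructor
  · intro hmem
    rcases l with _ | j
    · rw [chain_zero] at hmem
      exact absurd hmem (Finset.notMem_empty x)
    · exact Nat.lt_succ_of_le (Nat.find_le hmem)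
  · intro hlt
    exact chain_mono hT c hlt (Nat.find_spec h)

lemma posn_emm (hT : IsLCrossSection T) {c : Fin n} (hc : sig hT c = c) {l : ℕ}
    (hl : l < (blk hT c).card) : posn hT c (emm hT c l) = l := by
  obtain ⟨hm1, hm2, _⟩ := chain_dagger hT hc hl
  have h1 : posn hT c (emm hT c l) < l + 1 := by
    rw [← mem_chain_iff_posn hT hc hm1, chain_succ]
    exact Finset.mem_insert_self _ _
  have h2 : ¬ posn hT c (emm hT c l) < l := by
    rw [← mem_chain_iff_posn hT hc hm1]
    exact hm2
  omega

lemma emm_posn (hT : IsLCrossSection T) {c : Fin n} (hc : sig hT c = c)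
    {x : Fin n} (hx : x ∈ blk hT c) : emm hT c (posn hT c x) = x := by
  have h1 : x ∈ chainD hT c (posn hT c x + 1) :=
    (mem_chain_iff_posn hT hc hx _).2 (by omega)
  have h2 : x ∉ chainD hT c (posn hT c x) := by
    rw [mem_chain_iff_posn hT hc hx]
    omega
  rw [chain_succ] at h1
  rcases Finset.mem_insert.1 h1 with h | h
  · exact h.symm
  · exact absurd h h2

lemma posn_lt_card (hT : IsLCrossSection T) {c : Fin n} (hc : sig hT c = c)
    {x : Fin n} (hx : x ∈ blk hT c) : posn hT c x < (blk hT c).card := by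
  rw [← mem_chain_iff_posn hT hc hx, chain_eq_blk hT hc (le_refl _)]
  exact hx

lemma posn_inj (hT : IsLCrossSection T) {c : Fin n} (hc : sig hT c = c)
    {x y : Fin n} (hx : x ∈ blk hT c) (hy : y ∈ blk hT c)
    (h : posn hT c x = posn hT c y) : x = y := by
  rw [← emm_posn hT hc hx, ← emm_posn hT hc hy, h]

lemma emm_mem (hT : IsLCrossSection T) {c : Fin n} (hc : sig hT c = c) {l : ℕ}
    (hl : l < (blk hT c).card) : emm hT c l ∈ blk hT c := (chain_dagger hT hc hl).1

lemma emm_not_mem (hT : IsLCrossSection T) {c : Fin n} (hc : sig hT c = c) {l : ℕ}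
    (hl : l < (blk hT c).card) : emm hT c l ∉ chainD hT c l := (chain_dagger hT hc hl).2.1

lemma dmn_bot : dmn (⊥ : IS n) = ∅ := by
  ext z; simp [mem_dmn, bot_app]

/-- MAIN STRUCTURE THEOREM for a single block: the element with range `S` has domain the
initial chain segment of length `|S|`, and is increasing along the chain. -/
theorem structSB (hT : IsLCrossSection T) {c : Fin n} (hc : sig hT c = c) :
    ∀ r (S : Finset (Fin n)), S ⊆ blk hT c → S.card = r →
      dmn (tt hT S) = chainD hT c r ∧
      ∀ l l' w w', l < l' → l' < r → tt hT S (emm hT c l) = some w →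
        tt hT S (emm hT c l') = some w' → posn hT c w < posn hT c w' := by
  intro r
  induction r using Nat.strong_induction_on with
  | _ r IH =>
  intro S hS hSc
  rcases Nat.eq_zero_or_pos r with hr0 | hrpos
  · subst hr0
    have hSe : S = ∅ := Finset.card_eq_zero.1 hSc
    constructor
    · rw [hSe, tt_bot, chain_zero, dmn_bot]
    · intro l l' w w' _ h2 _ _
      exact absurd h2 (Nat.not_lt_zero l')
  obtain ⟨r', rfl⟩ : ∃ r', r = r' + 1 := ⟨r - 1, by omega⟩
  have hrk : r' + 1 ≤ (blk hT c).card := hSc ▸ Finset.card_le_card hS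
  have hr1k : r' < (blk hT c).card := by omega
  set τ := tt hT S with hτdef
  have hτmem : τ ∈ T := tt_mem hT S
  have hτrng : rng τ = S := rng_tt hT S
  have hdmncard : (dmn τ).card = r' + 1 := by rw [card_dmn, hτrng, hSc]
  have hdmnblk : dmn τ ⊆ blk hT c := dmn_subset_blk hT hS
  -- restriction of τ to the chain of length r'
  have hpidmem : pid (chainD hT c r') ∈ T :=
    tt_chain_eq_pid hT hc (le_of_lt hr1k) ▸ tt_mem hT _
  set u := pid (chainD hT c r') * τ with hudef
  have humem : u ∈ T := mul_mem hT hpidmem hτmem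
  have hudmn : dmn u = dmn τ ∩ chainD hT c r' := dmn_pid_mul _ _
  have huapp : ∀ z, u z = if z ∈ chainD hT c r' then τ z else none :=
    fun z => pid_mul_app _ _ z
  set S₁ := rng u with hS₁def
  set q := S₁.card with hqdef
  have hS₁sub : S₁ ⊆ S := by
    rw [hS₁def, hudef, ← hτrng]
    exact rng_mul_subset _ _
  have hqcard : (dmn u).card = q := by rw [hqdef, hS₁def, card_dmn]
  have hqle : q ≤ r' := by
    have hsub2 : dmn u ⊆ chainD hT c r' := hudmn ▸ Finset.inter_subset_right
    have := Finset.card_le_card hsub2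
    rw [hqcard, chain_card hT hc (le_of_lt hr1k)] at this
    exact this
  obtain ⟨hudmn_eq, humono⟩ := IH q (by omega) S₁ (hS₁sub.trans hS) hqdef.symm
  rw [hS₁def, tt_rng hT humem] at hudmn_eq humono
  -- Step 2 : q = r'
  have hqeq : q = r' := by
    by_contra hneq
    have hqlt : q < r' := by omega
    have hex : ∃ x, x ∈ dmn τ ∧ x ∉ chainD hT c r' := by
      by_contra hco
      push_neg at hco
      have hsub3 : dmn τ ⊆ chainD hT c r' := fun z hz => hco z hz
      have hdu : dmn u = dmn τ := by rw [hudmn]; exact Finset.inter_eq_left.2 hsub3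
      rw [hdu, hdmncard] at hqcard
      omega
    obtain ⟨x, hxd, hxc⟩ := hex
    have hxblk : x ∈ blk hT c := hdmnblk hxd
    obtain ⟨hem1, hem2, hdag⟩ := chain_dagger hT hc hr1k
    have hη := hdag x hxblk hxc
    set η := tt hT (insert x (chainD hT c r')) with hηdef
    set v := η * τ with hvdef
    have hvmem : v ∈ T := mul_mem hT (tt_mem hT _) hτmem
    have hvdmn : dmn v = insert (emm hT c r') (chainD hT c q) := by
      ext z
      rw [mem_dmn]
      constructor
      · rintro ⟨w, hw⟩
        rw [hvdef] at hw
        obtain ⟨y, hy1, hy2⟩ := mul_app_eq_some.1 hw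
        rw [hη z] at hy1
        split_ifs at hy1 with hz1 hz2
        · have : z ∈ dmn u := hudmn ▸ Finset.mem_inter.2
            ⟨mem_dmn_of_eq (by rw [Option.some.inj hy1]; exact hy2), hz1⟩
          rw [hudmn_eq] at this
          exact Finset.mem_insert_of_mem this
        · rw [hz2]; exact Finset.mem_insert_self _ _
      · intro hz
        rcases Finset.mem_insert.1 hz with rfl | hzq
        · have hη2 : η (emm hT c r') = some x := by
            rw [hη, if_neg hem2, if_pos rfl]
          obtain ⟨w', hw'⟩ := mem_dmn.1 hxd
          exact ⟨w', by rw [hvdef]; exact mul_app_eq_some.2 ⟨x, hη2, hw'⟩⟩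
        · have hzr : z ∈ chainD hT c r' := chain_mono hT c (le_of_lt hqlt) hzq
          have hzu : z ∈ dmn u := hudmn_eq ▸ hzq
          have hzτ : z ∈ dmn τ := (Finset.mem_inter.1 (hudmn ▸ hzu)).1
          obtain ⟨w', hw'⟩ := mem_dmn.1 hzτ
          exact ⟨w', by rw [hvdef]; exact mul_app_eq_some.2 ⟨z, by rw [hη, if_pos hzr], hw'⟩⟩
    have hemmq : emm hT c r' ∉ chainD hT c q :=
      fun h => hem2 (chain_mono hT c hqle h)
    have hvcard : (rng v).card = q + 1 := by
      rw [← card_dmn, hvdmn, Finset.card_insert_of_notMem hemmq,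
        chain_card hT hc (by omega)]
    have hvsub : rng v ⊆ blk hT c := by
      intro y hy
      exact hS (hτrng ▸ rng_mul_subset η τ hy)
    obtain ⟨hvdmn2, _⟩ := IH (q+1) (by omega) (rng v) hvsub hvcard
    rw [tt_rng hT hvmem] at hvdmn2
    have hfin : emm hT c r' ∈ chainD hT c (q+1) := by
      rw [← hvdmn2, hvdmn]; exact Finset.mem_insert_self _ _
    have := (mem_chain_iff_posn hT hc hem1 _).1 hfin
    rw [posn_emm hT hc hr1k] at this
    omega
  -- Step 3 : the domain is the full chain
  have hchainsub : chainD hT c r' ⊆ dmn τ := by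
    have h1 : dmn τ ∩ chainD hT c r' = chainD hT c r' :=
      Finset.eq_of_subset_of_card_le Finset.inter_subset_right
        (by rw [← hudmn, hqcard, hqeq, chain_card hT hc (le_of_lt hr1k)])
    intro z hz
    rw [← h1] at hz
    exact (Finset.mem_inter.1 hz).1
  obtain ⟨w, hwsd⟩ : ∃ w, dmn τ \ chainD hT c r' = {w} := by
    apply Finset.card_eq_one.1
    rw [Finset.card_sdiff_of_subset hchainsub, hdmncard, chain_card hT hc (le_of_lt hr1k)]
    omega
  have hwmem : w ∈ dmn τ ∧ w ∉ chainD hT c r' := by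
    have : w ∈ dmn τ \ chainD hT c r' := hwsd ▸ Finset.mem_singleton_self w
    exact ⟨(Finset.mem_sdiff.1 this).1, (Finset.mem_sdiff.1 this).2⟩
  have hdmnτ : dmn τ = insert w (chainD hT c r') := by
    ext z
    constructor
    · intro hz
      by_cases hzc : z ∈ chainD hT c r'
      · exact Finset.mem_insert_of_mem hzc
      · have : z ∈ dmn τ \ chainD hT c r' := Finset.mem_sdiff.2 ⟨hz, hzc⟩
        rw [hwsd] at this
        rw [Finset.mem_singleton.1 this]
        exact Finset.mem_insert_self _ _
    · intro hz
      rcases Finset.mem_insert.1 hz with rfl | hzc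
      · exact hwmem.1
      · exact hchainsub hzc
  have hwblk : w ∈ blk hT c := hdmnblk hwmem.1
  obtain ⟨hem1, hem2, hdag⟩ := chain_dagger hT hc hr1k
  have hη' := hdag w hwblk hwmem.2
  have hv'dmn : dmn (tt hT (insert w (chainD hT c r')) * τ) = chainD hT c (r'+1) := by
    rw [chain_succ]
    ext z
    rw [mem_dmn]
    constructor
    · rintro ⟨y, hy⟩
      obtain ⟨y', hy1, hy2⟩ := mul_app_eq_some.1 hy
      rw [hη' z] at hy1
      split_ifs at hy1 with hz1 hz2
      · exact Finset.mem_insert_of_mem hz1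
      · rw [hz2]; exact Finset.mem_insert_self _ _
    · intro hz
      rcases Finset.mem_insert.1 hz with rfl | hzc
      · obtain ⟨y, hy⟩ := mem_dmn.1 hwmem.1
        exact ⟨y, mul_app_eq_some.2 ⟨w, by rw [hη', if_neg hem2, if_pos rfl], hy⟩⟩
      · obtain ⟨y, hy⟩ := mem_dmn.1 (hchainsub hzc)
        exact ⟨y, mul_app_eq_some.2 ⟨z, by rw [hη', if_pos hzc], hy⟩⟩
  have hv'rngcard : (rng (tt hT (insert w (chainD hT c r')) * τ)).card = r' + 1 := by
    rw [← card_dmn, hv'dmn, chain_card hT hc hrk]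
  have hv'rng : rng (tt hT (insert w (chainD hT c r')) * τ) = S := by
    apply Finset.eq_of_subset_of_card_le
    · intro y hy
      exact hτrng ▸ rng_mul_subset _ τ hy
    · rw [hv'rngcard, hSc]
  have hv'eq : tt hT (insert w (chainD hT c r')) * τ = τ := by
    have := tt_unique hT (mul_mem hT (tt_mem hT _) hτmem) hv'rng
    rw [← hτdef] at this
    exact this
  have hdmn_final : dmn τ = chainD hT c (r'+1) := by rw [← hv'eq]; exact hv'dmn
  refine ⟨hdmn_final, ?_⟩
  -- Step 4 : monotonicity of the values
  have hul : ∀ l, l < r' → u (emm hT c l) = τ (emm hT c l) := by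
    intro l hl
    rw [huapp]
    rw [if_pos ((mem_chain_iff_posn hT hc (emm_mem hT hc (by omega)) r').2
      (by rw [posn_emm hT hc (by omega)]; omega))]
  intro l l' w1 w2 hll' hl'r hw1 hw2
  rcases Nat.lt_succ_iff_lt_or_eq.1 hl'r with hl'lt | hl'eq
  · -- both inside the restriction
    refine humono l l' w1 w2 hll' (by omega) ?_ ?_
    · rw [hul l (by omega)]; exact hw1
    · rw [hul l' hl'lt]; exact hw2
  · -- l' = r' : top value
    rw [hl'eq] at hw2
    have hw1S : w1 ∈ S := hτrng ▸ mem_rng_of_eq hw1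
    have hw2S : w2 ∈ S := hτrng ▸ mem_rng_of_eq hw2
    have hw1blk : w1 ∈ blk hT c := hS hw1S
    have hw2blk : w2 ∈ blk hT c := hS hw2S
    have hw12 : w1 ≠ w2 := by
      intro h
      rw [h] at hw1
      have heq2 := inj' hw1 hw2
      have hpl : posn hT c (emm hT c l) = l := posn_emm hT hc (by omega)
      have hpl' : posn hT c (emm hT c r') = r' := posn_emm hT hc hr1k
      rw [heq2, hpl'] at hpl
      omega
    by_contra hcon
    have hple : posn hT c w2 < posn hT c w1 := by
      rcases Nat.lt_or_ge (posn hT c w1) (posn hT c w2) with h | h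
      · exact absurd h hcon
      · rcases Nat.eq_or_lt_of_le h with h2 | h2
        · exact absurd (posn_inj hT hc hw2blk hw1blk h2) (fun hh => hw12 hh.symm)
        · exact h2
    set j := posn hT c w2 + 1 with hjdef
    have hjk : j ≤ (blk hT c).card := by
      have := posn_lt_card hT hc hw2blk
      omega
    have hpidj : pid (chainD hT c j) ∈ T :=
      tt_chain_eq_pid hT hc hjk ▸ tt_mem hT _
    set g := τ * pid (chainD hT c j) with hgdef
    have hgmem : g ∈ T := mul_mem hT hτmem hpidj
    have hgrng : rng g = S ∩ chainD hT c j := by rw [hgdef, rng_mul_pid, hτrng]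
    have hw1notin : w1 ∉ S ∩ chainD hT c j := by
      intro h
      have := (mem_chain_iff_posn hT hc hw1blk j).1 (Finset.mem_inter.1 h).2
      omega
    have hssub : S ∩ chainD hT c j ⊂ S :=
      ⟨Finset.inter_subset_left, fun h => hw1notin (h hw1S)⟩
    have hcard2 : (S ∩ chainD hT c j).card < r' + 1 := hSc ▸ Finset.card_lt_card hssub
    obtain ⟨hgdmn, _⟩ := IH (S ∩ chainD hT c j).card hcard2 (S ∩ chainD hT c j)
      (Finset.inter_subset_left.trans hS) rfl
    have hgdmn2 : dmn g = chainD hT c (S ∩ chainD hT c j).card := by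
      rw [← hgdmn]
      congr 1
      exact tt_unique hT hgmem hgrng
    have hemmg : emm hT c r' ∈ dmn g := by
      apply mem_dmn_of_eq (y := w2)
      rw [hgdef]
      exact mul_pid_eq_some.2 ⟨hw2, (mem_chain_iff_posn hT hc hw2blk j).2 (by omega)⟩
    rw [hgdmn2] at hemmg
    have hfin := (mem_chain_iff_posn hT hc hem1 _).1 hemmg
    rw [posn_emm hT hc hr1k] at hfin
    have : (S ∩ chainD hT c j).card ≤ r' := by
      have := Finset.card_lt_card hssub
      omega
    omega

/-- domain of a block element -/
lemma dmn_tt_block (hT : IsLCrossSection T) {c : Fin n} (hc : sig hT c = c)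
    {S : Finset (Fin n)} (hS : S ⊆ blk hT c) : dmn (tt hT S) = chainD hT c S.card :=
  (structSB hT hc S.card S hS rfl).1

/-- characterization of idempotent sets inside a block -/
lemma chain_char (hT : IsLCrossSection T) {c : Fin n} (hc : sig hT c = c)
    {X : Finset (Fin n)} (hX : X ⊆ blk hT c) (hpid : tt hT X = pid X) :
    X = chainD hT c X.card := by
  have h := dmn_tt_block hT hc hX
  rw [hpid, dmn_pid] at h
  exact h

lemma mem_dmn_blockwise (hT : IsLCrossSection T) (A : Finset (Fin n)) (z : Fin n) :
    z ∈ dmn (tt hT A) ↔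
      z ∈ chainD hT (sig hT z) (A ∩ blk hT (sig hT z)).card := by
  have hc : sig hT (sig hT z) = sig hT z := sig_sig hT z
  have happ := app_inter_blk hT A (z := z) (c := sig hT z) rfl
  have hdmn := dmn_tt_block hT hc (S := A ∩ blk hT (sig hT z)) Finset.inter_subset_right
  rw [mem_dmn, ← happ, ← mem_dmn, hdmn]

/-- the partial identity on the domain of any `tt A` belongs to `T` -/
lemma pid_dmn_tt_mem (hT : IsLCrossSection T) (A : Finset (Fin n)) :
    pid (dmn (tt hT A)) ∈ T := by
  set D := dmn (tt hT A) with hD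
  -- for each block, D ∩ blk c = chainD c (A ∩ blk c).card
  have hblk : ∀ c, sig hT c = c → D ∩ blk hT c = chainD hT c (A ∩ blk hT c).card := by
    intro c hc
    ext z
    rw [Finset.mem_inter]
    constructor
    · rintro ⟨hzD, hzb⟩
      have := (mem_dmn_blockwise hT A z).1 hzD
      rwa [mem_blk.1 hzb] at this
    · intro hz
      have hzb : z ∈ blk hT c := chain_sub_blk hT hc _ hz
      refine ⟨?_, hzb⟩
      rw [hD, mem_dmn_blockwise hT A z, mem_blk.1 hzb]
      exact hz
  have hdd : dmn (tt hT D) = D := by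
    ext z
    rw [mem_dmn_blockwise hT D z]
    set c := sig hT z with hcz
    have hc : sig hT c = c := sig_sig hT z
    have h1 : D ∩ blk hT c = chainD hT c (A ∩ blk hT c).card := hblk c hc
    have hcard : (D ∩ blk hT c).card = (A ∩ blk hT c).card := by
      rw [h1]
      exact chain_card hT hc (le_trans (Finset.card_le_card Finset.inter_subset_right)
        (le_of_eq rfl))
    rw [hcard, ← h1]
    constructor
    · intro h; exact (Finset.mem_inter.1 h).1
    · intro h; exact Finset.mem_inter.2 ⟨h, mem_blk.2 hcz.symm⟩
  have := eq_pid_of_dmn_eq_rng hT (tt_mem hT D) (by rw [hdd, rng_tt])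
  rw [rng_tt] at this
  rw [← this]
  exact tt_mem hT D

lemma mem_rng_mul {u v : IS n} {y : Fin n} :
    y ∈ rng (u * v) ↔ ∃ z ∈ rng u, v z = some y := by
  constructor
  · intro hy
    obtain ⟨x, hx⟩ := mem_rng.1 hy
    obtain ⟨z, hz1, hz2⟩ := mul_app_eq_some.1 hx
    exact ⟨z, mem_rng_of_eq hz1, hz2⟩
  · rintro ⟨z, hz1, hz2⟩
    obtain ⟨x, hx⟩ := mem_rng.1 hz1
    exact mem_rng.2 ⟨x, mul_app_eq_some.2 ⟨z, hx, hz2⟩⟩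

/-- left-divisibility detects inclusion of ranges -/
lemma subset_iff_exists_mul (hT : IsLCrossSection T) (A B : Finset (Fin n)) :
    B ⊆ A ↔ ∃ u ∈ T, u * tt hT A = tt hT B := by
  constructor
  · intro hBA
    set C := Finset.univ.filter (fun z => ∃ b ∈ B, tt hT A z = some b) with hC
    refine ⟨tt hT C, tt_mem hT C, ?_⟩
    apply tt_unique hT (mul_mem hT (tt_mem hT C) (tt_mem hT A))
    ext y
    rw [mem_rng_mul]
    constructor
    · rintro ⟨z, hz1, hz2⟩
      rw [rng_tt, hC, Finset.mem_filter] at hz1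
      obtain ⟨_, b, hb, hzb⟩ := hz1
      rw [hz2] at hzb
      rw [Option.some.inj hzb]
      exact hb
    · intro hy
      have hyA : y ∈ A := hBA hy
      obtain ⟨z, hz⟩ := mem_rng.1 (by rw [rng_tt]; exact hyA : y ∈ rng (tt hT A))
      refine ⟨z, ?_, hz⟩
      rw [rng_tt, hC, Finset.mem_filter]
      exact ⟨Finset.mem_univ z, y, hy, hz⟩
  · rintro ⟨u, _, hu⟩
    intro b hb
    have : b ∈ rng (u * tt hT A) := by rw [hu, rng_tt]; exact hb
    have := rng_mul_subset u (tt hT A) this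
    rwa [rng_tt] at this

end Chain

section Iso

variable {T₁ T₂ : Set (IS n)}

/-- the induced map on ranges -/
def psi (hT₁ : IsLCrossSection T₁) (φ : IS n → IS n) (A : Finset (Fin n)) : Finset (Fin n) :=
  rng (φ (tt hT₁ A))

lemma phi_tt (hT₁ : IsLCrossSection T₁) (hT₂ : IsLCrossSection T₂) {φ : IS n → IS n}
    (hmaps : Set.MapsTo φ T₁ T₂) (A : Finset (Fin n)) :
    φ (tt hT₁ A) = tt hT₂ (psi hT₁ φ A) :=
  (tt_rng hT₂ (hmaps (tt_mem hT₁ A))).symm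

lemma psi_mono (hT₁ : IsLCrossSection T₁) {φ : IS n → IS n}
    (hmul : ∀ a ∈ T₁, ∀ b ∈ T₁, φ (a * b) = φ a * φ b)
    {A B : Finset (Fin n)} (hBA : B ⊆ A) : psi hT₁ φ B ⊆ psi hT₁ φ A := by
  obtain ⟨u, huT, hu⟩ := (subset_iff_exists_mul hT₁ A B).1 hBA
  have h2 : φ (tt hT₁ B) = φ u * φ (tt hT₁ A) := by
    rw [← hu]; exact hmul u huT _ (tt_mem hT₁ A)
  have h3 : psi hT₁ φ B = rng (φ u * φ (tt hT₁ A)) := by rw [psi, h2]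
  rw [h3]
  intro y hy
  exact rng_mul_subset _ _ hy

lemma pid_mul_pid (D : Finset (Fin n)) : pid D * pid D = pid D := by
  apply PEquiv.ext; intro x
  rw [pid_mul_app]
  split_ifs with h
  · rfl
  · rw [pid_app, if_neg h]

lemma pid_transport (hT₁ : IsLCrossSection T₁) (hT₂ : IsLCrossSection T₂) {φ : IS n → IS n}
    (hmaps : Set.MapsTo φ T₁ T₂) (hmul : ∀ a ∈ T₁, ∀ b ∈ T₁, φ (a * b) = φ a * φ b)
    {D : Finset (Fin n)} (hD : pid D ∈ T₁) :
    φ (pid D) = pid (psi hT₁ φ D) := by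
  have hpt : tt hT₁ D = pid D := (tt_unique hT₁ hD (rng_pid D)).symm
  have hidem : φ (pid D) * φ (pid D) = φ (pid D) := by
    rw [← hmul _ hD _ hD, pid_mul_pid]
  have heq : φ (pid D) = pid (dmn (φ (pid D))) := idem_eq_pid hidem
  have hr : rng (φ (pid D)) = psi hT₁ φ D := by rw [psi, hpt]
  have h3 : dmn (φ (pid D)) = psi hT₁ φ D := by
    have h4 := congrArg rng heq
    rw [rng_pid] at h4
    rw [← h4, hr]
  rw [heq, h3]

lemma dmn_transport_sub (hT₁ : IsLCrossSection T₁) (hT₂ : IsLCrossSection T₂) {φ : IS n → IS n}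
    (hmaps : Set.MapsTo φ T₁ T₂) (hmul : ∀ a ∈ T₁, ∀ b ∈ T₁, φ (a * b) = φ a * φ b)
    (A : Finset (Fin n)) :
    dmn (tt hT₂ (psi hT₁ φ A)) ⊆ psi hT₁ φ (dmn (tt hT₁ A)) := by
  have hD := pid_dmn_tt_mem hT₁ A
  have h1 : pid (dmn (tt hT₁ A)) * tt hT₁ A = tt hT₁ A := pid_mul_eq_self_iff.2 (le_refl _)
  have h2 := hmul _ hD _ (tt_mem hT₁ A)
  rw [h1, pid_transport hT₁ hT₂ hmaps hmul hD, phi_tt hT₁ hT₂ hmaps A] at h2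
  exact pid_mul_eq_self_iff.1 h2.symm

lemma sig_transport (hT₁ : IsLCrossSection T₁) (hT₂ : IsLCrossSection T₂) {φ : IS n → IS n}
    (hmaps : Set.MapsTo φ T₁ T₂) (hmul : ∀ a ∈ T₁, ∀ b ∈ T₁, φ (a * b) = φ a * φ b)
    {th : Fin n → Fin n} (hth : ∀ x, psi hT₁ φ {x} = {th x}) (x : Fin n) :
    th (sig hT₁ x) = sig hT₂ (th x) := by
  have hrel : tt hT₁ {sig hT₁ x} * tt hT₁ {x} = tt hT₁ {x} := by
    rw [tt_single hT₁ x, tt_single hT₁ (sig hT₁ x), sig_sig hT₁ x]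
    exact PEquiv.single_trans_single _ _ _
  have h2 := hmul _ (tt_mem hT₁ {sig hT₁ x}) _ (tt_mem hT₁ {x})
  rw [hrel, phi_tt hT₁ hT₂ hmaps, phi_tt hT₁ hT₂ hmaps, hth, hth,
    tt_single hT₂, tt_single hT₂] at h2
  have h3 : (PEquiv.single (sig hT₂ (th (sig hT₁ x))) (th (sig hT₁ x)) *
      PEquiv.single (sig hT₂ (th x)) (th x)) (sig hT₂ (th x)) = some (th x) := by
    rw [← h2, PEquiv.single_apply]
  rw [mul_app] at h3
  rcases hcase : PEquiv.single (sig hT₂ (th (sig hT₁ x))) (th (sig hT₁ x))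
      (sig hT₂ (th x)) with _ | v
  · rw [hcase] at h3; cases h3
  · rw [hcase, Option.bind_some] at h3
    have hv : v = th (sig hT₁ x) := by
      by_cases h : sig hT₂ (th x) = sig hT₂ (th (sig hT₁ x))
      · rw [h, PEquiv.single_apply] at hcase
        exact (Option.some.inj hcase).symm
      · rw [PEquiv.single_apply_of_ne (fun hh => h hh.symm)] at hcase
        cases hcase
    have hv2 : v = sig hT₂ (th x) := by
      by_cases h : v = sig hT₂ (th x)
      · exact h
      · rw [PEquiv.single_apply_of_ne (Ne.symm h)] at h3
        cases h3
    rw [hv] at hv2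
    exact hv2


/-- MAIN THEOREM (internal form). -/
theorem main_conj {T₁ T₂ : Set (IS n)} (h₁ : IsLCrossSection T₁) (h₂ : IsLCrossSection T₂)
    (φ : IS n → IS n) (hbij : Set.BijOn φ T₁ T₂)
    (hmul : ∀ a ∈ T₁, ∀ b ∈ T₁, φ (a * b) = φ a * φ b) :
    ∃ Θ : Equiv.Perm (Fin n),
      ∀ α ∈ T₁, φ α = (Equiv.toPEquiv (Θ⁻¹ : Equiv.Perm (Fin n))) * (α * Equiv.toPEquiv Θ) := by
  classical
  haveI : Nonempty (IS n) := ⟨⊥⟩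
  set φ' := Function.invFunOn φ T₁ with hφ'def
  have hinvon : Set.InvOn φ' φ T₁ T₂ := hbij.invOn_invFunOn
  have hmaps : Set.MapsTo φ T₁ T₂ := hbij.mapsTo
  have hmaps' : Set.MapsTo φ' T₂ T₁ := by
    intro y hy
    obtain ⟨x, hx, hxy⟩ := hbij.surjOn hy
    rw [hφ'def]
    exact Function.invFunOn_mem (f := φ) (s := T₁) ⟨x, hx, hxy⟩
  have hmul' : ∀ a ∈ T₂, ∀ b ∈ T₂, φ' (a * b) = φ' a * φ' b := by
    intro a ha b hb
    have hab : φ' a * φ' b ∈ T₁ := mul_mem h₁ (hmaps' ha) (hmaps' hb)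
    have hfab : φ (φ' a * φ' b) = a * b := by
      rw [hmul _ (hmaps' ha) _ (hmaps' hb), hinvon.2 ha, hinvon.2 hb]
    rw [← hfab, hinvon.1 hab]
  have hψψ' : ∀ A, psi h₂ φ' (psi h₁ φ A) = A := by
    intro A
    show rng (φ' (tt h₂ (psi h₁ φ A))) = A
    rw [← phi_tt h₁ h₂ hmaps A, hinvon.1 (tt_mem h₁ A), rng_tt]
  have hψ'ψ : ∀ A, psi h₁ φ (psi h₂ φ' A) = A := by
    intro A
    show rng (φ (tt h₁ (psi h₂ φ' A))) = A
    rw [← phi_tt h₂ h₁ hmaps' A, hinvon.2 (tt_mem h₂ A), rng_tt]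
  have hbot₁ : (⊥ : IS n) ∈ T₁ := tt_bot h₁ ▸ tt_mem h₁ ∅
  have hbot₂ : (⊥ : IS n) ∈ T₂ := tt_bot h₂ ▸ tt_mem h₂ ∅
  have hφbot : φ ⊥ = ⊥ := by
    have ht : φ' ⊥ ∈ T₁ := hmaps' hbot₂
    have h2 := hmul ⊥ hbot₁ _ ht
    rw [bot_mul (φ' ⊥)] at h2
    rw [h2, hinvon.2 hbot₂]
    exact mul_bot (φ ⊥)
  have hφ'bot : φ' ⊥ = ⊥ := by
    have := hinvon.1 hbot₁
    rwa [hφbot] at this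
  have hψempty : psi h₁ φ ∅ = ∅ := by
    show rng (φ (tt h₁ ∅)) = ∅
    rw [tt_bot h₁, hφbot]
    ext y; simp [mem_rng, bot_app]
  have hψ'empty : psi h₂ φ' ∅ = ∅ := by
    show rng (φ' (tt h₂ ∅)) = ∅
    rw [tt_bot h₂, hφ'bot]
    ext y; simp [mem_rng, bot_app]
  -- singletons
  have hsing : ∀ x, ∃ y, psi h₁ φ {x} = {y} := by
    intro x
    have hne : psi h₁ φ {x} ≠ ∅ := by
      intro h
      have h0 := hψψ' {x}
      rw [h, hψ'empty] at h0
      exact absurd h0.symm (Finset.singleton_ne_empty x)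
    obtain ⟨y, hy⟩ := Finset.nonempty_iff_ne_empty.2 hne
    refine ⟨y, ?_⟩
    have hsub1 : psi h₂ φ' {y} ⊆ {x} := by
      have := psi_mono h₂ hmul' (Finset.singleton_subset_iff.2 hy)
      rwa [hψψ'] at this
    have hne2 : psi h₂ φ' {y} ≠ ∅ := by
      intro h
      have h0 := hψ'ψ {y}
      rw [h, hψempty] at h0
      exact absurd h0.symm (Finset.singleton_ne_empty y)
    have h3 : psi h₂ φ' {y} = {x} := by
      rcases Finset.subset_singleton_iff.1 hsub1 with h | h
      · exact absurd h hne2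
      · exact h
    have h4 := hψ'ψ {y}
    rw [h3] at h4
    exact h4
  have hsing' : ∀ y, ∃ x, psi h₂ φ' {y} = {x} := by
    intro y
    have hne : psi h₂ φ' {y} ≠ ∅ := by
      intro h
      have h0 := hψ'ψ {y}
      rw [h, hψempty] at h0
      exact absurd h0.symm (Finset.singleton_ne_empty y)
    obtain ⟨x, hx⟩ := Finset.nonempty_iff_ne_empty.2 hne
    refine ⟨x, ?_⟩
    have hsub1 : psi h₁ φ {x} ⊆ {y} := by
      have := psi_mono h₁ hmul (Finset.singleton_subset_iff.2 hx)
      rwa [hψ'ψ] at this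
    have hne2 : psi h₁ φ {x} ≠ ∅ := by
      intro h
      have h0 := hψψ' {x}
      rw [h, hψ'empty] at h0
      exact absurd h0.symm (Finset.singleton_ne_empty x)
    have h3 : psi h₁ φ {x} = {y} := by
      rcases Finset.subset_singleton_iff.1 hsub1 with h | h
      · exact absurd h hne2
      · exact h
    have h4 := hψψ' {x}
    rw [h3] at h4
    exact h4
  choose th hth using hsing
  choose th' hth' using hsing'
  have hth'th : ∀ x, th' (th x) = x := by
    intro x
    have h0 := hψψ' {x}
    rw [hth, hth'] at h0
    exact Finset.singleton_injective h0
  have hthth' : ∀ y, th (th' y) = y := by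
    intro y
    have h0 := hψ'ψ {y}
    rw [hth', hth] at h0
    exact Finset.singleton_injective h0
  have thinj : Function.Injective th := Function.LeftInverse.injective hth'th
  -- images
  have himg : ∀ A, psi h₁ φ A = A.image th := by
    intro A
    apply Finset.Subset.antisymm
    · intro y hy
      have hsub1 : psi h₂ φ' {y} ⊆ A := by
        have := psi_mono h₂ hmul' (Finset.singleton_subset_iff.2 hy)
        rwa [hψψ'] at this
      rw [hth'] at hsub1
      exact Finset.mem_image.2 ⟨th' y, Finset.singleton_subset_iff.1 hsub1, hthth' y⟩
    · intro y hy
      obtain ⟨x, hx, rfl⟩ := Finset.mem_image.1 hy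
      have := psi_mono h₁ hmul (Finset.singleton_subset_iff.2 hx)
      rw [hth] at this
      exact this (Finset.mem_singleton_self _)
  have himg' : ∀ A, psi h₂ φ' A = A.image th' := by
    intro A
    apply Finset.Subset.antisymm
    · intro y hy
      have hsub1 : psi h₁ φ {y} ⊆ A := by
        have := psi_mono h₁ hmul (Finset.singleton_subset_iff.2 hy)
        rwa [hψ'ψ] at this
      rw [hth] at hsub1
      exact Finset.mem_image.2 ⟨th y, Finset.singleton_subset_iff.1 hsub1, hth'th y⟩
    · intro y hy
      obtain ⟨x, hx, rfl⟩ := Finset.mem_image.1 hy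
      have := psi_mono h₂ hmul' (Finset.singleton_subset_iff.2 hx)
      rw [hth'] at this
      exact this (Finset.mem_singleton_self _)
  -- domain equality transport
  have hdmn : ∀ A, dmn (tt h₂ (A.image th)) = (dmn (tt h₁ A)).image th := by
    intro A
    apply Finset.Subset.antisymm
    · have := dmn_transport_sub h₁ h₂ hmaps hmul A
      rw [himg, himg] at this
      exact this
    · have h2 := dmn_transport_sub h₂ h₁ hmaps' hmul' (psi h₁ φ A)
      rw [hψψ' A, himg', himg] at h2
      intro y hy
      obtain ⟨x, hx, rfl⟩ := Finset.mem_image.1 hy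
      obtain ⟨z, hz, hzx⟩ := Finset.mem_image.1 (h2 hx)
      have : th (th' z) = th x := by rw [hzx]
      rw [hthth'] at this
      rw [← this]
      exact hz
  -- sig etc transports
  have hsig : ∀ x, th (sig h₁ x) = sig h₂ (th x) := sig_transport h₁ h₂ hmaps hmul hth
  have hsig' : ∀ y, th' (sig h₂ y) = sig h₁ (th' y) := sig_transport h₂ h₁ hmaps' hmul' hth'
  have hblk : ∀ c, (blk h₁ c).image th = blk h₂ (th c) := by
    intro c
    ext y
    constructor
    · intro hy
      obtain ⟨x, hx, rfl⟩ := Finset.mem_image.1 hy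
      rw [mem_blk] at hx ⊢
      rw [← hsig, hx]
    · intro hy
      refine Finset.mem_image.2 ⟨th' y, ?_, hthth' y⟩
      rw [mem_blk] at hy ⊢
      rw [← hsig', hy, hth'th]
  have hblkcard : ∀ c, (blk h₂ (th c)).card = (blk h₁ c).card := by
    intro c
    rw [← hblk, Finset.card_image_of_injective _ thinj]
  have hchain : ∀ c, sig h₁ c = c → ∀ l, l ≤ (blk h₁ c).card →
      (chainD h₁ c l).image th = chainD h₂ (th c) l := by
    intro c hc l hl
    have hc2 : sig h₂ (th c) = th c := by rw [← hsig, hc]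
    have hXblk : (chainD h₁ c l).image th ⊆ blk h₂ (th c) := by
      rw [← hblk]
      exact Finset.image_subset_image (chain_sub_blk h₁ hc l)
    have hpidmem : pid (chainD h₁ c l) ∈ T₁ := tt_chain_eq_pid h₁ hc hl ▸ tt_mem h₁ _
    have hXpid : tt h₂ ((chainD h₁ c l).image th) = pid ((chainD h₁ c l).image th) := by
      rw [← himg, ← phi_tt h₁ h₂ hmaps, tt_chain_eq_pid h₁ hc hl,
        pid_transport h₁ h₂ hmaps hmul hpidmem, himg]
    have hXcard : ((chainD h₁ c l).image th).card = l := by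
      rw [Finset.card_image_of_injective _ thinj, chain_card h₁ hc hl]
    have := chain_char h₂ hc2 hXblk hXpid
    rw [hXcard] at this
    exact this
  have hemm : ∀ c, sig h₁ c = c → ∀ l, l < (blk h₁ c).card →
      th (emm h₁ c l) = emm h₂ (th c) l := by
    intro c hc l hl
    have h1 : th (emm h₁ c l) ∈ chainD h₂ (th c) (l+1) := by
      rw [← hchain c hc (l+1) (by omega)]
      exact Finset.mem_image_of_mem th (by
        rw [chain_succ]; exact Finset.mem_insert_self _ _)
    have h2 : th (emm h₁ c l) ∉ chainD h₂ (th c) l := by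
      rw [← hchain c hc l (by omega)]
      intro hmem
      obtain ⟨x, hx, hxe⟩ := Finset.mem_image.1 hmem
      rw [thinj hxe] at hx
      exact emm_not_mem h₁ hc hl hx
    rw [chain_succ] at h1
    rcases Finset.mem_insert.1 h1 with h | h
    · exact h
    · exact absurd h h2
  have hposn : ∀ c, sig h₁ c = c → ∀ x ∈ blk h₁ c, posn h₂ (th c) (th x) = posn h₁ c x := by
    intro c hc x hx
    have hc2 : sig h₂ (th c) = th c := by rw [← hsig, hc]
    have h1 : th x = emm h₂ (th c) (posn h₁ c x) := by
      conv_lhs => rw [← emm_posn h₁ hc hx]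
      exact hemm c hc _ (posn_lt_card h₁ hc hx)
    rw [h1, posn_emm h₂ hc2 (by rw [hblkcard]; exact posn_lt_card h₁ hc hx)]
  -- value transport within a block
  have hblockval : ∀ c, sig h₁ c = c → ∀ S, S ⊆ blk h₁ c → ∀ z, sig h₁ z = c →
      tt h₂ (S.image th) (th z) = Option.map th (tt h₁ S z) := by
    intro c hc S hS z hzc
    have hc2 : sig h₂ (th c) = th c := by rw [← hsig, hc]
    have hzblk : z ∈ blk h₁ c := mem_blk.2 hzc
    have hrk : S.card ≤ (blk h₁ c).card := Finset.card_le_card hS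
    have hSim : S.image th ⊆ blk h₂ (th c) := by
      rw [← hblk]; exact Finset.image_subset_image hS
    have hSimcard : (S.image th).card = S.card := Finset.card_image_of_injective _ thinj
    obtain ⟨hdmn₁, hmono₁⟩ := structSB h₁ hc S.card S hS rfl
    obtain ⟨hdmn₂, hmono₂⟩ := structSB h₂ hc2 S.card (S.image th) hSim hSimcard
    by_cases hzin : z ∈ chainD h₁ c S.card
    · -- z in the domain chain
      have hlr : posn h₁ c z < S.card := (mem_chain_iff_posn h₁ hc hzblk _).1 hzin
      have hvex₁ : ∀ i, i < S.card → ∃ v, tt h₁ S (emm h₁ c i) = some v := by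
        intro i hi
        apply mem_dmn.1
        rw [hdmn₁]
        exact (mem_chain_iff_posn h₁ hc (emm_mem h₁ hc (by omega)) _).2
          (by rw [posn_emm h₁ hc (by omega)]; omega)
      have hvex₂ : ∀ i, i < S.card → ∃ v, tt h₂ (S.image th) (emm h₂ (th c) i) = some v := by
        intro i hi
        apply mem_dmn.1
        rw [hdmn₂]
        have hik : i < (blk h₂ (th c)).card := by rw [hblkcard]; omega
        exact (mem_chain_iff_posn h₂ hc2 (emm_mem h₂ hc2 hik) _).2
          (by rw [posn_emm h₂ hc2 hik]; omega)
      choose val₁ hval₁ using hvex₁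
      choose val₂ hval₂ using hvex₂
      have hval₁S : ∀ i (hi : i < S.card), val₁ i hi ∈ S := by
        intro i hi
        rw [← rng_tt h₁ S]
        exact mem_rng_of_eq (hval₁ i hi)
      have hval₂S : ∀ i (hi : i < S.card), val₂ i hi ∈ S.image th := by
        intro i hi
        rw [← rng_tt h₂ (S.image th)]
        exact mem_rng_of_eq (hval₂ i hi)
      have hPcard : (S.image (posn h₁ c)).card = S.card :=
        Finset.card_image_of_injOn (fun a ha b hb hab => posn_inj h₁ hc (hS ha) (hS hb) hab)
      have hF₁mem : ∀ i : Fin S.card, posn h₁ c (val₁ i.1 i.isLt) ∈ S.image (posn h₁ c) :=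
        fun i => Finset.mem_image_of_mem _ (hval₁S i.1 i.isLt)
      have hF₂mem : ∀ i : Fin S.card,
          posn h₂ (th c) (val₂ i.1 i.isLt) ∈ S.image (posn h₁ c) := by
        intro i
        obtain ⟨x, hx, hxe⟩ := Finset.mem_image.1 (hval₂S i.1 i.isLt)
        rw [← hxe, hposn c hc x (hS hx)]
        exact Finset.mem_image_of_mem _ hx
      have hF₁mono : StrictMono (fun i : Fin S.card => posn h₁ c (val₁ i.1 i.isLt)) := by
        intro i j hij
        exact hmono₁ i.1 j.1 _ _ hij j.isLt (hval₁ i.1 i.isLt) (hval₁ j.1 j.isLt)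
      have hF₂mono : StrictMono (fun i : Fin S.card => posn h₂ (th c) (val₂ i.1 i.isLt)) := by
        intro i j hij
        exact hmono₂ i.1 j.1 _ _ hij j.isLt (hval₂ i.1 i.isLt) (hval₂ j.1 j.isLt)
      have hF₁eq := Finset.orderEmbOfFin_unique hPcard hF₁mem hF₁mono
      have hF₂eq := Finset.orderEmbOfFin_unique hPcard hF₂mem hF₂mono
      have hvaleq : ∀ i (hi : i < S.card), val₂ i hi = th (val₁ i hi) := by
        intro i hi
        have hFi : posn h₂ (th c) (val₂ i hi) = posn h₁ c (val₁ i hi) := by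
          have e1 : posn h₂ (th c) (val₂ i hi)
              = (fun j : Fin S.card => posn h₂ (th c) (val₂ j.1 j.isLt)) ⟨i, hi⟩ := rfl
          have e2 : posn h₁ c (val₁ i hi)
              = (fun j : Fin S.card => posn h₁ c (val₁ j.1 j.isLt)) ⟨i, hi⟩ := rfl
          rw [e1, e2, hF₁eq, hF₂eq]
        apply posn_inj h₂ hc2 (hSim (hval₂S i hi))
          (hSim (Finset.mem_image_of_mem th (hval₁S i hi)))
        rw [hFi, ← hposn c hc _ (hS (hval₁S i hi))]
      have hzeq : z = emm h₁ c (posn h₁ c z) := (emm_posn h₁ hc hzblk).symm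
      rw [hzeq, hemm c hc _ (by omega), hval₁ _ hlr, hval₂ _ hlr, hvaleq _ hlr]
      rfl
    · -- z outside the domain chain : both sides none
      have hv1 : tt h₁ S z = none := by
        rw [← not_mem_dmn, hdmn₁]
        exact hzin
      have hv2 : tt h₂ (S.image th) (th z) = none := by
        rw [← not_mem_dmn, hdmn₂, ← hchain c hc _ hrk]
        intro hmem
        obtain ⟨x, hx, hxe⟩ := Finset.mem_image.1 hmem
        rw [thinj hxe] at hx
        exact hzin hx
      rw [hv1, hv2]
      rfl
  -- assemble the permutation
  refine ⟨⟨th, th', hth'th, hthth'⟩, ?_⟩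
  intro α hα
  apply PEquiv.ext
  intro w
  have hRHS : ((Equiv.toPEquiv ((⟨th, th', hth'th, hthth'⟩ : Equiv.Perm (Fin n))⁻¹)) *
      (α * Equiv.toPEquiv (⟨th, th', hth'th, hthth'⟩ : Equiv.Perm (Fin n)))) w
      = Option.map th (α (th' w)) := by
    rw [mul_app, Equiv.Perm.inv_def, Equiv.toPEquiv_apply, Option.bind_some, mul_app,
      show (⟨th, th', hth'th, hthth'⟩ : Equiv.Perm (Fin n)).symm w = th' w from rfl]
    rcases hαz : α (th' w) with _ | v
    · rfl
    · rw [Option.bind_some, Equiv.toPEquiv_apply]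
      rfl
  rw [hRHS]
  have hφα : φ α = tt h₂ ((rng α).image th) := by
    conv_lhs => rw [← tt_rng h₁ hα]
    rw [phi_tt h₁ h₂ hmaps, himg]
  rw [hφα]
  obtain ⟨z, rfl⟩ : ∃ z, w = th z := ⟨th' w, (hthth' w).symm⟩
  rw [hth'th z]
  have hcc : sig h₁ (sig h₁ z) = sig h₁ z := sig_sig h₁ z
  have hL := app_inter_blk h₂ ((rng α).image th) (z := th z)
    (c := th (sig h₁ z)) (hsig z).symm
  have hR := app_inter_blk h₁ (rng α) (z := z) (c := sig h₁ z) rfl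
  rw [← hL]
  have hint : (rng α).image th ∩ blk h₂ (th (sig h₁ z))
      = ((rng α) ∩ blk h₁ (sig h₁ z)).image th := by
    rw [← hblk, ← Finset.image_inter _ _ thinj]
  rw [hint]
  have hαval : α z = tt h₁ (rng α ∩ blk h₁ (sig h₁ z)) z := by
    conv_lhs => rw [← tt_rng h₁ hα]
    rw [hR]
  rw [hαval]
  exact hblockval (sig h₁ z) hcc (rng α ∩ blk h₁ (sig h₁ z))
    Finset.inter_subset_right z rfl

end Iso
end CS

/-- every isomorphism of L-cross-sections of `IS n` is a conjugacy:
there is a permutation `Θ` with `φ(α) = Θ⁻¹ α Θ` for all `α` in the first cross-section. -/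
theorem iso_lcross_is_conjugacy (n : ℕ) (T₁ T₂ : Set (IS n))
    (h₁ : IsLCrossSection T₁) (h₂ : IsLCrossSection T₂)
    (φ : IS n → IS n) (hφ : IsSemiIso T₁ T₂ φ) :
    ∃ Θ : Equiv.Perm (Fin n),
      ∀ α ∈ T₁, φ α = (Equiv.toPEquiv (Θ⁻¹ : Equiv.Perm (Fin n))) * (α * Equiv.toPEquiv Θ) := by
  obtain ⟨hbij, hmul⟩ := hφ
  exact CS.main_conj h₁ h₂ φ hbij hmul

end ISW
end
end
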